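/- arXiv:1206.4810 — 8 statements merged into one kernel-verified Lean document; each statement's English description precedes it below -/
import Mathlib

section
/- Let T > 0, A > 0, k > 0 and b, σ : [0,T] × ℝ → ℝ. Suppose θ₁ : [0,T] × ℝ → ℝ is continuously differentiable in t and twice continuously differentiable in s, satisfies ∂_t θ₁ + b·∂_s θ₁ + (1/2)σ²·∂_{ss} θ₁ = 0 on [0,T] × ℝ and θ₁(T,s) = s for all s; and suppose θ₀ : [0,T] × ℝ → ℝ, with the same smoothness, satisfies ∂_t θ₀ + b·∂_s θ₀ + (1/2)σ²·∂_{ss} θ₀ + (2A/(e·k))·cosh(k·(θ₁(t,s) − s)) = 0 on [0,T] × ℝ and θ₀(T,s) = 0 for all s. Define u(t,s,q,x) = x + θ₀(t,s) + q·θ₁(t,s) for (t,s,q,x) ∈ [0,T] × ℝ × ℤ × ℝ. Then: (i) for every (t,s,q,x), the ask functional δ ↦ A·e^{−kδ}·(u(t,s,q−1,x+s+δ) − u(t,s,q,x)) attains its supremum over δ ∈ ℝ at the unique point δ⁺* = 1/k − s + θ₁(t,s), with supremum value (A/(e·k))·e^{−k(θ₁(t,s)−s)}, and the bid functional δ ↦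 A·e^{−kδ}·(u(t,s,q+1,x−s+δ) − u(t,s,q,x)) attains its supremum at the unique point δ⁻* = 1/k + s − θ₁(t,s), with value (A/(e·k))·e^{k(θ₁(t,s)−s)}; in particular the optimal bid–ask spread is δ⁺* + δ⁻* = 2/k; (ii) HJB(u)(t,s,q,x) = 0 for all (t,s,q,x) ∈ [0,T] × ℝ × ℤ × ℝ, and u(T,s,q,x) = x + q·s. -/
section AuxLemmas

private lemma aux_eq (A k c : ℝ) (hk : 0 < k) :
    A * Real.exp (-(k * (1 / k - c))) * ((1 / k - c) + c)
      = A / (Real.exp 1 * k) * Real.exp (k * c) := by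
  have hk' : k ≠ 0 := ne_of_gt hk
  have : -(k * (1 / k - c)) = k * c + (-1) := by field_simp; ring
  rw [this, Real.exp_add, Real.exp_neg]
  field_simp
  ring

private lemma aux_lt (A k c : ℝ) (hA : 0 < A) (hk : 0 < k) (δ : ℝ) (hδ : δ ≠ 1 / k - c) :
    A * Real.exp (-(k * δ)) * (δ + c) < A / (Real.exp 1 * k) * Real.exp (k * c) := by
  have hk' : k ≠ 0 := ne_of_gt hk
  set w := k * (δ + c) with hw
  have hw1 : w ≠ 1 := by
    intro h
    apply hδ
    field_simp at h ⊢
    linarith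
  have key : w * Real.exp (-w) < Real.exp (-1) := by
    have h1 : w - 1 + 1 < Real.exp (w - 1) := Real.add_one_lt_exp (sub_ne_zero.mpr hw1)
    have h2 : w < Real.exp (w - 1) := by linarith
    have h3 : Real.exp (-w) > 0 := Real.exp_pos _
    calc w * Real.exp (-w) < Real.exp (w - 1) * Real.exp (-w) := by nlinarith
      _ = Real.exp (-1) := by rw [← Real.exp_add]; ring_nf
  have e1 : Real.exp (-(k * δ)) = Real.exp (k * c) * Real.exp (-w) := by
    rw [← Real.exp_add]; congr 1; rw [hw]; ring
  have e2 : δ + c = w / k := by rw [hw]; field_simp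
  rw [e1, e2]
  have key' : w * (Real.exp w)⁻¹ < (Real.exp 1)⁻¹ := by
    rwa [Real.exp_neg, Real.exp_neg] at key
  have hpos : 0 < A * Real.exp (k * c) / k := by positivity
  calc A * (Real.exp (k * c) * Real.exp (-w)) * (w / k)
      = A * Real.exp (k * c) / k * (w * (Real.exp w)⁻¹) := by rw [Real.exp_neg]; ring
    _ < A * Real.exp (k * c) / k * (Real.exp 1)⁻¹ := mul_lt_mul_of_pos_left key' hpos
    _ = A / (Real.exp 1 * k) * Real.exp (k * c) := by field_simp

private lemma aux_sup (A k c : ℝ) (hA : 0 < A) (hk : 0 < k) :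
    (⨆ δ : ℝ, A * Real.exp (-(k * δ)) * (δ + c))
      = A / (Real.exp 1 * k) * Real.exp (k * c) := by
  have hle : ∀ δ : ℝ, A * Real.exp (-(k * δ)) * (δ + c)
      ≤ A / (Real.exp 1 * k) * Real.exp (k * c) := by
    intro δ
    by_cases h : δ = 1 / k - c
    · subst h; exact le_of_eq (aux_eq A k c hk)
    · exact le_of_lt (aux_lt A k c hA hk δ h)
  refine le_antisymm (ciSup_le hle) ?_
  have := le_ciSup ⟨_, Set.forall_mem_range.mpr hle⟩ (1 / k - c)
  rwa [aux_eq A k c hk] at this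

private lemma aux_deriv1 (f g : ℝ → ℝ) (x c q : ℝ)
    (hf : Differentiable ℝ f) (hg : Differentiable ℝ g) :
    deriv (fun y => x + f y + q * g y) c = deriv f c + q * deriv g c := by
  rw [show (fun y => x + f y + q * g y) = (fun y => (x + f y) + q * g y) from rfl,
    deriv_fun_add (by fun_prop : DifferentiableAt ℝ (fun y => x + f y) c) ((hg c).const_mul q),
    deriv_const_add, deriv_const_mul _ (hg c)]

private lemma aux_cd (f : ℝ → ℝ) (hf : ContDiff ℝ 2 f) : ContDiff ℝ 1 (deriv f) := by
  have : ContDiff ℝ ((1 : ℕ) + 1) f := by exact_mod_cast hf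
  exact (contDiff_succ_iff_deriv.mp this).2.2

private lemma aux_deriv2 (f g : ℝ → ℝ) (x c q : ℝ) (hf : ContDiff ℝ 2 f) (hg : ContDiff ℝ 2 g) :
    deriv (deriv (fun y => x + f y + q * g y)) c
      = deriv (deriv f) c + q * deriv (deriv g) c := by
  have hfd : Differentiable ℝ f := hf.differentiable (by norm_num)
  have hgd : Differentiable ℝ g := hg.differentiable (by norm_num)
  have h1 : deriv (fun y => x + f y + q * g y) = fun y => deriv f y + q * deriv g y :=
    funext fun y => aux_deriv1 f g x y q hfd hgd
  rw [h1, deriv_fun_add ((aux_cd f hf).differentiable (by norm_num) c)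
      (((aux_cd g hg).differentiable (by norm_num) c).const_mul q),
    deriv_const_mul _ ((aux_cd g hg).differentiable (by norm_num) c)]

end AuxLemmas

/-- The Hamilton–Jacobi–Bellman expression of a value function
`u : (t,s,q,x) ↦ u t s q x` for the market-making problem with intensities
`A·e^{−kδ}` and mid-price diffusion coefficients `b`, `σ`. -/
noncomputable def HJB (A k : ℝ) (b σ : ℝ → ℝ → ℝ) (u : ℝ → ℝ → ℤ → ℝ → ℝ)
    (t s : ℝ) (q : ℤ) (x : ℝ) : ℝ :=
  deriv (fun τ => u τ s q x) t
    + b t s * deriv (fun y => u t y q x) s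
    + 1 / 2 * (σ t s) ^ 2 * deriv (deriv (fun y => u t y q x)) s
    + (⨆ δ : ℝ, A * Real.exp (-(k * δ)) * (u t s (q - 1) (x + s + δ) - u t s q x))
    + (⨆ δ : ℝ, A * Real.exp (-(k * δ)) * (u t s (q + 1) (x - s + δ) - u t s q x))

/-- Verification theorem for the linear utility `φ(s,q,x) = x + q·s` (Theorem 1 of the
paper): with `θ₁`, `θ₀` the Feynman–Kac solutions of the stated PDEs, the function
`u(t,s,q,x) = x + θ₀(t,s) + q·θ₁(t,s)` satisfies the HJB equation, the ask/bid
functionals attain their suprema at the unique points `δ±* = 1/k ∓ (s − θ₁)` with the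
stated values, and the optimal spread is `2/k`. -/
theorem stmt_2 (T A k : ℝ) (hT : 0 < T) (hA : 0 < A) (hk : 0 < k)
    (b σ θ₀ θ₁ : ℝ → ℝ → ℝ)
    (hθ₁t : ∀ s : ℝ, ContDiff ℝ 1 fun τ => θ₁ τ s)
    (hθ₁s : ∀ t : ℝ, ContDiff ℝ 2 fun y => θ₁ t y)
    (hθ₁pde : ∀ t ∈ Set.Icc (0 : ℝ) T, ∀ s : ℝ,
      deriv (fun τ => θ₁ τ s) t + b t s * deriv (fun y => θ₁ t y) s
        + 1 / 2 * (σ t s) ^ 2 * deriv (deriv (fun y => θ₁ t y)) s = 0)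
    (hθ₁T : ∀ s : ℝ, θ₁ T s = s)
    (hθ₀t : ∀ s : ℝ, ContDiff ℝ 1 fun τ => θ₀ τ s)
    (hθ₀s : ∀ t : ℝ, ContDiff ℝ 2 fun y => θ₀ t y)
    (hθ₀pde : ∀ t ∈ Set.Icc (0 : ℝ) T, ∀ s : ℝ,
      deriv (fun τ => θ₀ τ s) t + b t s * deriv (fun y => θ₀ t y) s
        + 1 / 2 * (σ t s) ^ 2 * deriv (deriv (fun y => θ₀ t y)) s
        + 2 * A / (Real.exp 1 * k) * Real.cosh (k * (θ₁ t s - s)) = 0)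
    (hθ₀T : ∀ s : ℝ, θ₀ T s = 0)
    (u : ℝ → ℝ → ℤ → ℝ → ℝ)
    (hu : ∀ (t s : ℝ) (q : ℤ) (x : ℝ), u t s q x = x + θ₀ t s + (q : ℝ) * θ₁ t s) :
    ∀ t ∈ Set.Icc (0 : ℝ) T, ∀ (s : ℝ) (q : ℤ) (x : ℝ),
      -- (i) the ask functional attains its supremum at the unique point
      -- `δ⁺* = 1/k − s + θ₁(t,s)`, with value `(A/(e·k))·e^{−k(θ₁ − s)}`
      (A * Real.exp (-(k * (1 / k - s + θ₁ t s)))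
            * (u t s (q - 1) (x + s + (1 / k - s + θ₁ t s)) - u t s q x)
          = A / (Real.exp 1 * k) * Real.exp (-(k * (θ₁ t s - s)))) ∧
      (∀ δ : ℝ, δ ≠ 1 / k - s + θ₁ t s →
        A * Real.exp (-(k * δ)) * (u t s (q - 1) (x + s + δ) - u t s q x)
          < A * Real.exp (-(k * (1 / k - s + θ₁ t s)))
              * (u t s (q - 1) (x + s + (1 / k - s + θ₁ t s)) - u t s q x)) ∧
      -- the bid functional attains its supremum at the unique point
      -- `δ⁻* = 1/k + s − θ₁(t,s)`, with value `(A/(e·k))·e^{k(θ₁ − s)}`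
      (A * Real.exp (-(k * (1 / k + s - θ₁ t s)))
            * (u t s (q + 1) (x - s + (1 / k + s - θ₁ t s)) - u t s q x)
          = A / (Real.exp 1 * k) * Real.exp (k * (θ₁ t s - s))) ∧
      (∀ δ : ℝ, δ ≠ 1 / k + s - θ₁ t s →
        A * Real.exp (-(k * δ)) * (u t s (q + 1) (x - s + δ) - u t s q x)
          < A * Real.exp (-(k * (1 / k + s - θ₁ t s)))
              * (u t s (q + 1) (x - s + (1 / k + s - θ₁ t s)) - u t s q x)) ∧
      -- in particular the optimal bid–ask spread is `2/k`
      ((1 / k - s + θ₁ t s) + (1 / k + s - θ₁ t s) = 2 / k) ∧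
      -- (ii) `u` solves the HJB equation with terminal condition `x + q·s`
      HJB A k b σ u t s q x = 0 ∧
      u T s q x = x + (q : ℝ) * s := by
  intro t ht s q x
  have hask : ∀ δ : ℝ, u t s (q - 1) (x + s + δ) - u t s q x = δ + (s - θ₁ t s) := by
    intro δ; simp only [hu]; push_cast; ring
  have hbid : ∀ δ : ℝ, u t s (q + 1) (x - s + δ) - u t s q x = δ + (θ₁ t s - s) := by
    intro δ; simp only [hu]; push_cast; ring
  have hpt1 : 1 / k - s + θ₁ t s = 1 / k - (s - θ₁ t s) := by ring
  have hpt2 : 1 / k + s - θ₁ t s = 1 / k - (θ₁ t s - s) := by ring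
  have hexp1 : -(k * (θ₁ t s - s)) = k * (s - θ₁ t s) := by ring
  have haskval : A * Real.exp (-(k * (1 / k - s + θ₁ t s)))
      * (u t s (q - 1) (x + s + (1 / k - s + θ₁ t s)) - u t s q x)
      = A / (Real.exp 1 * k) * Real.exp (-(k * (θ₁ t s - s))) := by
    rw [hask, hexp1, hpt1]; exact aux_eq A k (s - θ₁ t s) hk
  have hbidval : A * Real.exp (-(k * (1 / k + s - θ₁ t s)))
      * (u t s (q + 1) (x - s + (1 / k + s - θ₁ t s)) - u t s q x)
      = A / (Real.exp 1 * k) * Real.exp (k * (θ₁ t s - s)) := by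
    rw [hbid, hpt2]; exact aux_eq A k (θ₁ t s - s) hk
  refine ⟨haskval, ?_, hbidval, ?_, by ring, ?_, ?_⟩
  · intro δ hδ
    rw [haskval, hask, hexp1]
    exact aux_lt A k (s - θ₁ t s) hA hk δ (fun h => hδ (by rw [h]; ring))
  · intro δ hδ
    rw [hbidval, hbid]
    exact aux_lt A k (θ₁ t s - s) hA hk δ (fun h => hδ (by rw [h]; ring))
  · -- the HJB equation
    have ht1 : (fun τ => u τ s q x) = fun τ => x + θ₀ τ s + (q : ℝ) * θ₁ τ s :=
      funext fun τ => hu τ s q x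
    have hs1 : (fun y => u t y q x) = fun y => x + θ₀ t y + (q : ℝ) * θ₁ t y :=
      funext fun y => hu t y q x
    have dT : deriv (fun τ => x + θ₀ τ s + (q : ℝ) * θ₁ τ s) t
        = deriv (fun τ => θ₀ τ s) t + (q : ℝ) * deriv (fun τ => θ₁ τ s) t :=
      aux_deriv1 _ _ x t (q : ℝ) ((hθ₀t s).differentiable (by norm_num))
        ((hθ₁t s).differentiable (by norm_num))
    have dS : deriv (fun y => x + θ₀ t y + (q : ℝ) * θ₁ t y) s
        = deriv (fun y => θ₀ t y) s + (q : ℝ) * deriv (fun y => θ₁ t y) s :=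
      aux_deriv1 _ _ x s (q : ℝ) ((hθ₀s t).differentiable (by norm_num))
        ((hθ₁s t).differentiable (by norm_num))
    have dSS : deriv (deriv (fun y => x + θ₀ t y + (q : ℝ) * θ₁ t y)) s
        = deriv (deriv (fun y => θ₀ t y)) s + (q : ℝ) * deriv (deriv (fun y => θ₁ t y)) s :=
      aux_deriv2 _ _ x s (q : ℝ) (hθ₀s t) (hθ₁s t)
    have sup1 : (⨆ δ : ℝ, A * Real.exp (-(k * δ)) * (u t s (q - 1) (x + s + δ) - u t s q x))
        = A / (Real.exp 1 * k) * Real.exp (-(k * (θ₁ t s - s))) := by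
      have h : (fun δ : ℝ => A * Real.exp (-(k * δ)) * (u t s (q - 1) (x + s + δ) - u t s q x))
          = fun δ => A * Real.exp (-(k * δ)) * (δ + (s - θ₁ t s)) :=
        funext fun δ => by rw [hask δ]
      rw [h, aux_sup A k (s - θ₁ t s) hA hk, hexp1]
    have sup2 : (⨆ δ : ℝ, A * Real.exp (-(k * δ)) * (u t s (q + 1) (x - s + δ) - u t s q x))
        = A / (Real.exp 1 * k) * Real.exp (k * (θ₁ t s - s)) := by
      have h : (fun δ : ℝ => A * Real.exp (-(k * δ)) * (u t s (q + 1) (x - s + δ) - u t s q x))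
          = fun δ => A * Real.exp (-(k * δ)) * (δ + (θ₁ t s - s)) :=
        funext fun δ => by rw [hbid δ]
      rw [h, aux_sup A k (θ₁ t s - s) hA hk]
    have p0 := hθ₀pde t ht s
    have p1 := hθ₁pde t ht s
    rw [Real.cosh_eq] at p0
    unfold HJB
    rw [ht1, hs1, dT, dS, dSS, sup1, sup2]
    linear_combination p0 + (q : ℝ) * p1
  · rw [hu, hθ₀T, hθ₁T]; ring
end

section
/- Let T > 0, A > 0, k > 0, let b, σ : [0,T] × ℝ → ℝ be continuous and bounded, and let g : [0,T] × ℝ → ℝ be continuous with g(t,s) ≥ 2A/(e·k) for all (t,s). Suppose θ₀ : [0,T] × ℝ → ℝ is continuous and bounded on [0,T] × ℝ, continuously differentiable in t and twice continuously differentiable in s on [0,T) × ℝ, satisfies ∂_t θ₀ + b·∂_s θ₀ + (1/2)σ²·∂_{ss} θ₀ + g = 0 on [0,T) × ℝ, and θ₀(T,s) = 0 for all s. Then θ₀(t,s) ≥ (2A/(e·k))·(T − t) for all (t,s) ∈ [0,T] × ℝ. -/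
set_option maxHeartbeats 1000000

open Set Filter Topology

lemma myDeriv_nonneg_of_min_right {h : ℝ → ℝ} {a T d : ℝ} (haT : a < T)
    (hd : HasDerivAt h d a) (hmin : ∀ t ∈ Set.Ioo a T, h a ≤ h t) : 0 ≤ d := by
  have hs : Filter.Tendsto (slope h a) (𝓝[>] a) (𝓝 d) :=
    (hasDerivAt_iff_tendsto_slope.mp hd).mono_left
      (nhdsWithin_mono a (fun x (hx : x ∈ Set.Ioi a) => Set.mem_compl_singleton_iff.mpr hx.ne'))
  refine ge_of_tendsto hs ?_
  filter_upwards [Ioo_mem_nhdsGT_of_mem ⟨le_refl a, haT⟩] with x hx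
  rw [slope_def_field]
  exact div_nonneg (sub_nonneg.mpr (hmin x hx)) (sub_nonneg.mpr hx.1.le)

lemma mySecond_deriv_nonneg_of_min {φ : ℝ → ℝ} {x : ℝ} (hφ : ContDiff ℝ 2 φ)
    (hmin : ∀ y, φ x ≤ φ y) : 0 ≤ deriv (deriv φ) x := by
  by_contra hneg
  push_neg at hneg
  have hloc : IsLocalMin φ x := Filter.Eventually.of_forall hmin
  have h1 : deriv φ x = 0 := hloc.deriv_eq_zero
  have hφ' : ContDiff ℝ 1 (deriv φ) := by
    have h2 : (2 : WithTop ℕ∞) = 1 + 1 := by norm_num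
    rw [h2] at hφ
    exact (contDiff_succ_iff_deriv.mp hφ).2.2
  have hcont : Continuous (deriv (deriv φ)) := (contDiff_one_iff_deriv.mp hφ').2
  obtain ⟨δ, hδpos, hδ⟩ : ∃ δ > 0, ∀ y ∈ Metric.ball x δ, deriv (deriv φ) y < 0 := by
    have := hcont.continuousAt (x := x) (Iio_mem_nhds hneg)
    rw [Filter.mem_map, Metric.mem_nhds_iff] at this
    obtain ⟨δ, hδpos, hδ⟩ := this
    exact ⟨δ, hδpos, fun y hy => hδ hy⟩
  have hmono : StrictMonoOn φ (Set.Icc (x - δ/2) x) := by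
    apply strictMonoOn_of_deriv_pos (convex_Icc _ _) (hφ.continuous.continuousOn)
    intro z hz
    rw [interior_Icc] at hz
    have hzball : z ∈ Metric.ball x δ := by
      rw [Metric.mem_ball, Real.dist_eq, abs_lt]
      constructor <;> [linarith [hz.1]; linarith [hz.2]]
    have hxball : x ∈ Metric.ball x δ := Metric.mem_ball_self hδpos
    have hanti : StrictAntiOn (deriv φ) (Metric.ball x δ) := by
      apply strictAntiOn_of_deriv_neg (convex_ball x δ)
        ((hφ'.continuous).continuousOn)
      intro y hy
      exact hδ y (by rwa [Metric.isOpen_ball.interior_eq] at hy)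
    have := hanti hzball hxball hz.2
    linarith [h1 ▸ this]
  have hlt : φ (x - δ/2) < φ x :=
    hmono ⟨le_refl _, by linarith⟩ ⟨by linarith, le_refl _⟩ (by linarith)
  exact absurd (hmin (x - δ/2)) (not_le.mpr hlt)


/-- Parabolic maximum-principle form of item 3 of Theorem 1: if `θ₀` is continuous
and bounded on `[0,T] × ℝ`, smooth on `[0,T) × ℝ`, solves
`∂ₜθ₀ + b·∂ₛθ₀ + (1/2)σ²·∂ₛₛθ₀ + g = 0` with `g ≥ 2A/(e·k)` and `θ₀(T,·) = 0`,
then `θ₀(t,s) ≥ (2A/(e·k))·(T − t)` on `[0,T] × ℝ`. -/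
theorem stmt_3 (T A k : ℝ) (hT : 0 < T) (hA : 0 < A) (hk : 0 < k)
    (b σ g θ₀ : ℝ → ℝ → ℝ)
    (hb_cont : ContinuousOn (fun p : ℝ × ℝ => b p.1 p.2) (Set.Icc 0 T ×ˢ Set.univ))
    (hb_bdd : ∃ M : ℝ, ∀ t ∈ Set.Icc (0 : ℝ) T, ∀ s : ℝ, |b t s| ≤ M)
    (hσ_cont : ContinuousOn (fun p : ℝ × ℝ => σ p.1 p.2) (Set.Icc 0 T ×ˢ Set.univ))
    (hσ_bdd : ∃ M : ℝ, ∀ t ∈ Set.Icc (0 : ℝ) T, ∀ s : ℝ, |σ t s| ≤ M)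
    (hg_cont : ContinuousOn (fun p : ℝ × ℝ => g p.1 p.2) (Set.Icc 0 T ×ˢ Set.univ))
    (hg_lb : ∀ t ∈ Set.Icc (0 : ℝ) T, ∀ s : ℝ, 2 * A / (Real.exp 1 * k) ≤ g t s)
    (hθ₀_cont : ContinuousOn (fun p : ℝ × ℝ => θ₀ p.1 p.2) (Set.Icc 0 T ×ˢ Set.univ))
    (hθ₀_bdd : ∃ M : ℝ, ∀ t ∈ Set.Icc (0 : ℝ) T, ∀ s : ℝ, |θ₀ t s| ≤ M)
    (hθ₀_t : ∀ s : ℝ, ∀ t ∈ Set.Ico (0 : ℝ) T, ContDiffAt ℝ 1 (fun τ => θ₀ τ s) t)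
    (hθ₀_s : ∀ t ∈ Set.Ico (0 : ℝ) T, ContDiff ℝ 2 fun y => θ₀ t y)
    (hpde : ∀ t ∈ Set.Ico (0 : ℝ) T, ∀ s : ℝ,
      deriv (fun τ => θ₀ τ s) t + b t s * deriv (fun y => θ₀ t y) s
        + 1 / 2 * (σ t s) ^ 2 * deriv (deriv (fun y => θ₀ t y)) s + g t s = 0)
    (hterm : ∀ s : ℝ, θ₀ T s = 0) :
    ∀ t ∈ Set.Icc (0 : ℝ) T, ∀ s : ℝ, 2 * A / (Real.exp 1 * k) * (T - t) ≤ θ₀ t s := by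
  obtain ⟨Mb0, hMb0⟩ := hb_bdd
  obtain ⟨Mσ0, hMσ0⟩ := hσ_bdd
  obtain ⟨Mθ0, hMθ0⟩ := hθ₀_bdd
  set c : ℝ := 2 * A / (Real.exp 1 * k) with hc
  have hcpos : 0 < c := by
    apply div_pos (by linarith) (mul_pos (Real.exp_pos 1) hk)
  set Mb : ℝ := max Mb0 0 with hMbdef
  set Mσ : ℝ := max Mσ0 0 with hMσdef
  set Mθ : ℝ := max Mθ0 0 with hMθdef
  have hMbnn : 0 ≤ Mb := le_max_right _ _
  have hMσnn : 0 ≤ Mσ := le_max_right _ _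
  have hMθnn : 0 ≤ Mθ := le_max_right _ _
  have hMb : ∀ t ∈ Set.Icc (0 : ℝ) T, ∀ s : ℝ, |b t s| ≤ Mb :=
    fun t ht s => (hMb0 t ht s).trans (le_max_left _ _)
  have hMσ : ∀ t ∈ Set.Icc (0 : ℝ) T, ∀ s : ℝ, |σ t s| ≤ Mσ :=
    fun t ht s => (hMσ0 t ht s).trans (le_max_left _ _)
  have hMθ : ∀ t ∈ Set.Icc (0 : ℝ) T, ∀ s : ℝ, |θ₀ t s| ≤ Mθ :=
    fun t ht s => (hMθ0 t ht s).trans (le_max_left _ _)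
  set lam : ℝ := Mb + Mσ ^ 2 + 1 with hlamdef
  have hlam1 : 1 ≤ lam := by nlinarith [sq_nonneg Mσ]
  have hlamnn : 0 ≤ lam := by linarith
  -- The key barrier estimate
  have key : ∀ ε : ℝ, 0 < ε → ∀ t ∈ Set.Icc (0 : ℝ) T, ∀ s : ℝ,
      c * (T - t) - ε * Real.exp (lam * T) * (1 + s ^ 2) ≤ θ₀ t s := by
    intro ε hε
    set w : ℝ → ℝ → ℝ :=
      fun t s => θ₀ t s - c * (T - t) + ε * Real.exp (lam * (T - t)) * (1 + s ^ 2) with hw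
    have hE1 : ∀ t ∈ Set.Icc (0 : ℝ) T, 1 ≤ Real.exp (lam * (T - t)) := by
      intro t ht
      apply Real.one_le_exp
      have : 0 ≤ T - t := by linarith [ht.2]
      positivity
    have hElamT : ∀ t ∈ Set.Icc (0 : ℝ) T, Real.exp (lam * (T - t)) ≤ Real.exp (lam * T) := by
      intro t ht
      apply Real.exp_le_exp.mpr
      nlinarith [ht.1, ht.2]
    -- continuity of w
    have hWcont : ContinuousOn (fun p : ℝ × ℝ => w p.1 p.2) (Set.Icc 0 T ×ˢ Set.univ) := by
      apply ContinuousOn.add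
      · exact hθ₀_cont.sub (Continuous.continuousOn (by fun_prop))
      · exact Continuous.continuousOn (by fun_prop)
    -- radius for compact localization
    set R : ℝ := Real.sqrt ((Mθ + c * T) / ε) with hRdef
    have hRnn : 0 ≤ R := Real.sqrt_nonneg _
    have hR2 : ε * R ^ 2 = Mθ + c * T := by
      rw [hRdef, Real.sq_sqrt (by positivity)]
      field_simp
    set K : Set (ℝ × ℝ) := Set.Icc 0 T ×ˢ Set.Icc (-R) R with hK
    have hKcp : IsCompact K := isCompact_Icc.prod isCompact_Icc
    have hT0K : ((T, 0) : ℝ × ℝ) ∈ K :=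
      ⟨⟨le_of_lt hT, le_refl T⟩, ⟨by simpa using neg_nonpos.mpr hRnn, hRnn⟩⟩
    have hKsub : K ⊆ Set.Icc 0 T ×ˢ Set.univ := Set.prod_mono subset_rfl (Set.subset_univ _)
    obtain ⟨p₀, hp₀K, hp₀min⟩ :=
      hKcp.exists_isMinOn ⟨(T, 0), hT0K⟩ (hWcont.mono hKsub)
    set t₀ : ℝ := p₀.1 with ht₀def
    set s₀ : ℝ := p₀.2 with hs₀def
    have ht₀Icc : t₀ ∈ Set.Icc (0 : ℝ) T := hp₀K.1
    have hwT0 : w T 0 = ε := by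
      simp [hw, hterm 0]
    have hp₀T0 : w t₀ s₀ ≤ ε := by
      have := hp₀min hT0K
      simpa [hwT0] using this
    -- global minimality
    have hglob : ∀ t ∈ Set.Icc (0 : ℝ) T, ∀ s : ℝ, w t₀ s₀ ≤ w t s := by
      intro t ht s
      by_cases hs : |s| ≤ R
      · exact hp₀min (⟨ht, abs_le.mp hs⟩ : (t, s) ∈ K)
      · push_neg at hs
        have hs2 : R ^ 2 ≤ s ^ 2 := by
          have := sq_le_sq' (by linarith : -(|s|) ≤ R) hs.le
          simpa [sq_abs] using this
        have h1 : -Mθ ≤ θ₀ t s := by linarith [abs_le.mp (hMθ t ht s)]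
        have h2 : c * (T - t) ≤ c * T := by nlinarith [ht.1, hcpos]
        have h3 : ε * (1 + s ^ 2) ≤ ε * Real.exp (lam * (T - t)) * (1 + s ^ 2) := by
          have h1 : (0:ℝ) ≤ 1 + s ^ 2 := by positivity
          have h2' := mul_le_mul_of_nonneg_right
            (mul_le_mul_of_nonneg_left (hE1 t ht) hε.le) h1
          calc ε * (1 + s ^ 2) = ε * 1 * (1 + s ^ 2) := by ring
          _ ≤ ε * Real.exp (lam * (T - t)) * (1 + s ^ 2) := h2'
        have h4 : ε ≤ w t s := by
          have : ε * R ^ 2 ≤ ε * s ^ 2 := by nlinarith [hε.le]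
          simp only [hw]
          nlinarith [hR2]
        linarith [hp₀T0]
    rcases eq_or_lt_of_le ht₀Icc.2 with ht₀T | ht₀T
    · -- minimum at the terminal time: w t₀ s₀ ≥ 0
      intro t ht s
      have hw0 : 0 ≤ w t₀ s₀ := by
        simp only [hw, ht₀T, hterm s₀]
        have : (0:ℝ) ≤ ε * Real.exp (lam * (T - T)) * (1 + s₀ ^ 2) := by positivity
        linarith
      have hg1 := hglob t ht s
      have hb1 : ε * Real.exp (lam * (T - t)) * (1 + s ^ 2)
          ≤ ε * Real.exp (lam * T) * (1 + s ^ 2) := by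
        have h1 : (0:ℝ) ≤ 1 + s ^ 2 := by positivity
        exact mul_le_mul_of_nonneg_right
          (mul_le_mul_of_nonneg_left (hElamT t ht) hε.le) h1
      simp only [hw] at hg1 hw0
      linarith [hw0, hb1, hg1]
    · -- interior minimum: contradiction with the PDE
      exfalso
      have ht₀Ico : t₀ ∈ Set.Ico (0 : ℝ) T := ⟨ht₀Icc.1, ht₀T⟩
      set Et : ℝ := Real.exp (lam * (T - t₀)) with hEt
      have hEtpos : 0 < Et := Real.exp_pos _
      have hεEt : 0 < ε * Et := mul_pos hε hEtpos
      -- smoothness in s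
      have hθs2 : ContDiff ℝ 2 (fun y => θ₀ t₀ y) := hθ₀_s t₀ ht₀Ico
      have hθsd : Differentiable ℝ (fun y => θ₀ t₀ y) :=
        hθs2.differentiable (by norm_num)
      have hθsd' : Differentiable ℝ (deriv (fun y => θ₀ t₀ y)) := by
        have h2 : (2 : WithTop ℕ∞) = 1 + 1 := by norm_num
        rw [h2] at hθs2
        exact ((contDiff_succ_iff_deriv.mp hθs2).2.2).differentiable (by norm_num)
      -- derivative of w in s, as a function
      have hderiv_s : ∀ y : ℝ, HasDerivAt (fun z => w t₀ z)
          (deriv (fun z => θ₀ t₀ z) y + ε * Et * (2 * y)) y := by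
        intro y
        have h1 : HasDerivAt (fun z => θ₀ t₀ z) (deriv (fun z => θ₀ t₀ z) y) y :=
          (hθsd y).hasDerivAt
        have h2 : HasDerivAt (fun z : ℝ => ε * Et * (1 + z ^ 2)) (ε * Et * (2 * y)) y := by
          have := ((hasDerivAt_pow 2 y).const_add (1 : ℝ)).const_mul (ε * Et)
          simpa using this
        exact (h1.sub_const (c * (T - t₀))).add h2
      have hφ2 : ContDiff ℝ 2 (fun z => w t₀ z) := by
        simp only [hw]
        apply ContDiff.add
        · exact hθs2.sub contDiff_const
        · apply ContDiff.mul contDiff_const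
          exact contDiff_const.add (contDiff_id.pow 2)
      have hmins : ∀ y : ℝ, w t₀ s₀ ≤ w t₀ y := fun y => hglob t₀ ht₀Icc y
      -- first derivative in s vanishes
      have hds : deriv (fun z => θ₀ t₀ z) s₀ + ε * Et * (2 * s₀) = 0 := by
        have hloc : IsLocalMin (fun z => w t₀ z) s₀ := Filter.Eventually.of_forall hmins
        have := hloc.deriv_eq_zero
        rwa [(hderiv_s s₀).deriv] at this
      -- second derivative in s is nonnegative
      have hdss : 0 ≤ deriv (deriv (fun z => θ₀ t₀ z)) s₀ + ε * Et * 2 := by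
        have hfun : deriv (fun z => w t₀ z) =
            fun y => deriv (fun z => θ₀ t₀ z) y + ε * Et * (2 * y) :=
          funext fun y => (hderiv_s y).deriv
        have h2nd := mySecond_deriv_nonneg_of_min hφ2 hmins
        rw [hfun] at h2nd
        have hdd : HasDerivAt (fun y => deriv (fun z => θ₀ t₀ z) y + ε * Et * (2 * y))
            (deriv (deriv (fun z => θ₀ t₀ z)) s₀ + ε * Et * 2) s₀ := by
          have ha : HasDerivAt (fun y => deriv (fun z => θ₀ t₀ z) y)
              (deriv (deriv (fun z => θ₀ t₀ z)) s₀) s₀ := (hθsd' s₀).hasDerivAt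
          have hb : HasDerivAt (fun y : ℝ => ε * Et * (2 * y)) (ε * Et * 2) s₀ := by
            simpa using ((hasDerivAt_id s₀).const_mul (2:ℝ)).const_mul (ε * Et)
          exact ha.add hb
        rwa [hdd.deriv] at h2nd
      -- derivative of w in t at t₀
      have hθtdiff : DifferentiableAt ℝ (fun τ => θ₀ τ s₀) t₀ :=
        (hθ₀_t s₀ t₀ ht₀Ico).differentiableAt (by norm_num)
      set Dθ : ℝ := deriv (fun τ => θ₀ τ s₀) t₀ with hDθ
      have hdt_has : HasDerivAt (fun τ => w τ s₀)
          (Dθ + c + ε * (Et * -lam) * (1 + s₀ ^ 2)) t₀ := by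
        have h1 : HasDerivAt (fun τ => θ₀ τ s₀) Dθ t₀ := hθtdiff.hasDerivAt
        have h2 : HasDerivAt (fun τ : ℝ => c * (T - τ)) (c * -1) t₀ := by
          simpa using ((hasDerivAt_id t₀).const_sub T).const_mul c
        have hinner : HasDerivAt (fun τ : ℝ => lam * (T - τ)) (lam * -1) t₀ := by
          simpa using ((hasDerivAt_id t₀).const_sub T).const_mul lam
        have hexp : HasDerivAt (fun τ : ℝ => Real.exp (lam * (T - τ)))
            (Real.exp (lam * (T - t₀)) * (lam * -1)) t₀ := hinner.exp
        have h3 : HasDerivAt (fun τ : ℝ => ε * Real.exp (lam * (T - τ)) * (1 + s₀ ^ 2))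
            (ε * (Real.exp (lam * (T - t₀)) * (lam * -1)) * (1 + s₀ ^ 2)) t₀ :=
          (hexp.const_mul ε).mul_const (1 + s₀ ^ 2)
        have := (h1.sub h2).add h3
        refine this.congr_deriv ?_
        rw [hEt]; ring
      have hdtnn : 0 ≤ Dθ + c + ε * (Et * -lam) * (1 + s₀ ^ 2) := by
        apply myDeriv_nonneg_of_min_right ht₀T hdt_has
        intro τ hτ
        exact hglob τ ⟨le_trans ht₀Icc.1 hτ.1.le, hτ.2.le⟩ s₀
      -- the PDE at (t₀, s₀)
      have hpde' := hpde t₀ ht₀Ico s₀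
      rw [← hDθ] at hpde'
      -- bounds
      have hbb := abs_le.mp (hMb t₀ ht₀Icc s₀)
      have hσb := abs_le.mp (hMσ t₀ ht₀Icc s₀)
      have hbs2 : 2 * (b t₀ s₀ * s₀) ≤ Mb * (1 + s₀ ^ 2) := by
        nlinarith [sq_nonneg (s₀ - 1), sq_nonneg (s₀ + 1), hbb.1, hbb.2]
      have hσ2 : (σ t₀ s₀) ^ 2 ≤ Mσ ^ 2 := by
        nlinarith [hσb.1, hσb.2]
      have hσnn : (0:ℝ) ≤ (σ t₀ s₀) ^ 2 := sq_nonneg _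
      have hgl : c ≤ g t₀ s₀ := hg_lb t₀ ht₀Icc s₀
      set X : ℝ := deriv (fun z => θ₀ t₀ z) s₀ with hX
      set Y : ℝ := deriv (deriv (fun z => θ₀ t₀ z)) s₀ with hY
      -- combine
      have hXeq : X = -(ε * Et * (2 * s₀)) := by linarith [hds]
      have hA1 : -(b t₀ s₀ * X) ≤ ε * Et * (Mb * (1 + s₀ ^ 2)) := by
        rw [hXeq]
        linarith [mul_le_mul_of_nonneg_left hbs2 hεEt.le]
      have hA2 : -(1 / 2 * (σ t₀ s₀) ^ 2 * Y) ≤ ε * Et * Mσ ^ 2 := by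
        linarith [mul_nonneg hσnn hdss, mul_nonneg hεEt.le (by linarith : (0:ℝ) ≤ Mσ ^ 2 - (σ t₀ s₀) ^ 2)]
      have hlam_ineq : Mb * (1 + s₀ ^ 2) + Mσ ^ 2 - lam * (1 + s₀ ^ 2) ≤ -1 := by
        rw [hlamdef]
        linarith [sq_nonneg s₀, mul_nonneg (sq_nonneg Mσ) (sq_nonneg s₀)]
      have hfin : ε * Et * (Mb * (1 + s₀ ^ 2) + Mσ ^ 2 - lam * (1 + s₀ ^ 2)) ≤ ε * Et * (-1) :=
        mul_le_mul_of_nonneg_left hlam_ineq hεEt.le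
      linarith [hdtnn, hpde', hA1, hA2, hfin, hεEt, hgl]
  -- conclude by letting ε → 0
  intro t ht s
  have hC : 0 < Real.exp (lam * T) * (1 + s ^ 2) := by positivity
  have : ∀ ε' : ℝ, 0 < ε' → c * (T - t) ≤ θ₀ t s + ε' := by
    intro ε' hε'
    have hkey := key (ε' / (Real.exp (lam * T) * (1 + s ^ 2))) (by positivity) t ht s
    have : ε' / (Real.exp (lam * T) * (1 + s ^ 2)) * Real.exp (lam * T) * (1 + s ^ 2) = ε' := by
      field_simp
    linarith [hkey, this ▸ hkey]
  linarith [le_of_forall_pos_le_add this]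
end

section
/- Let T > 0, A > 0, k > 0 and σ : [0,T] × ℝ → ℝ, and take drift b ≡ 0. Define u(t,s,q,x) = x + q·s + (2A/(e·k))·(T − t) on [0,T] × ℝ × ℤ × ℝ. Then for every (t,s,q,x): the ask functional δ ↦ A·e^{−kδ}·(u(t,s,q−1,x+s+δ) − u(t,s,q,x)) and the bid functional δ ↦ A·e^{−kδ}·(u(t,s,q+1,x−s+δ) − u(t,s,q,x)) each attain their supremum over δ ∈ ℝ at the unique point δ* = 1/k, with supremum value A/(e·k); and HJB(u)(t,s,q,x) = 0 with terminal condition u(T,s,q,x) = x + q·s. -/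
/-- Martingale case of Theorem 1 (drift `b ≡ 0`): for
`u(t,s,q,x) = x + q·s + (2A/(e·k))·(T − t)`, both the ask and bid functionals attain
their suprema at the unique point `δ* = 1/k` with value `A/(e·k)`, and `u` solves the
HJB equation with terminal condition `x + q·s`. -/
theorem stmt_4 (T A k : ℝ) (hT : 0 < T) (hA : 0 < A) (hk : 0 < k)
    (σ : ℝ → ℝ → ℝ)
    (u : ℝ → ℝ → ℤ → ℝ → ℝ)
    (hu : ∀ (t s : ℝ) (q : ℤ) (x : ℝ),
      u t s q x = x + (q : ℝ) * s + 2 * A / (Real.exp 1 * k) * (T - t)) :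
    ∀ t ∈ Set.Icc (0 : ℝ) T, ∀ (s : ℝ) (q : ℤ) (x : ℝ),
      -- the ask functional attains its supremum at the unique point `δ* = 1/k`,
      -- with supremum value `A/(e·k)`
      (A * Real.exp (-(k * (1 / k))) * (u t s (q - 1) (x + s + 1 / k) - u t s q x)
          = A / (Real.exp 1 * k)) ∧
      (∀ δ : ℝ, δ ≠ 1 / k →
        A * Real.exp (-(k * δ)) * (u t s (q - 1) (x + s + δ) - u t s q x)
          < A * Real.exp (-(k * (1 / k))) * (u t s (q - 1) (x + s + 1 / k) - u t s q x)) ∧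
      -- the bid functional attains its supremum at the unique point `δ* = 1/k`,
      -- with supremum value `A/(e·k)`
      (A * Real.exp (-(k * (1 / k))) * (u t s (q + 1) (x - s + 1 / k) - u t s q x)
          = A / (Real.exp 1 * k)) ∧
      (∀ δ : ℝ, δ ≠ 1 / k →
        A * Real.exp (-(k * δ)) * (u t s (q + 1) (x - s + δ) - u t s q x)
          < A * Real.exp (-(k * (1 / k))) * (u t s (q + 1) (x - s + 1 / k) - u t s q x)) ∧
      -- `u` solves the HJB equation (with drift `b ≡ 0`) and terminal condition
      HJB A k (fun _ _ => 0) σ u t s q x = 0 ∧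
      u T s q x = x + (q : ℝ) * s := by
  intro t _ s q x
  -- the jump differences are just `δ`
  have hask : ∀ δ : ℝ, u t s (q-1) (x+s+δ) - u t s q x = δ := by
    intro δ; simp [hu]; push_cast; ring
  have hbid : ∀ δ : ℝ, u t s (q+1) (x-s+δ) - u t s q x = δ := by
    intro δ; simp [hu]; push_cast; ring
  -- value at the optimum
  have heq : A * Real.exp (-(k*(1/k))) * (1/k) = A/(Real.exp 1 * k) := by
    rw [mul_one_div_cancel hk.ne', Real.exp_neg]
    field_simp
  -- strict maximality
  have hlt : ∀ δ : ℝ, δ ≠ 1/k → A * Real.exp (-(k*δ)) * δ < A/(Real.exp 1 * k) := by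
    intro δ hδ
    have hne : k*δ - 1 ≠ 0 := by
      intro h; apply hδ; field_simp; linarith
    have h1 : k*δ < Real.exp (k*δ) / Real.exp 1 := by
      have h := Real.add_one_lt_exp hne
      rw [Real.exp_sub] at h; linarith
    have he1 : (0:ℝ) < Real.exp 1 := Real.exp_pos _
    have hδlt : δ < Real.exp (k*δ) / (Real.exp 1 * k) := by
      rw [lt_div_iff₀ (by positivity)]
      calc δ * (Real.exp 1 * k) = (k * δ) * Real.exp 1 := by ring
        _ < (Real.exp (k*δ) / Real.exp 1) * Real.exp 1 :=
            mul_lt_mul_of_pos_right h1 he1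
        _ = Real.exp (k*δ) := by field_simp
    calc A * Real.exp (-(k*δ)) * δ
        < A * Real.exp (-(k*δ)) * (Real.exp (k*δ) / (Real.exp 1 * k)) :=
          mul_lt_mul_of_pos_left hδlt (by positivity)
      _ = A/(Real.exp 1 * k) := by rw [Real.exp_neg]; field_simp
  have hub : ∀ δ : ℝ, A * Real.exp (-(k*δ)) * δ ≤ A/(Real.exp 1 * k) := by
    intro δ
    by_cases h : δ = 1/k
    · subst h; exact heq.le
    · exact (hlt δ h).le
  -- the suprema
  have hsup : (⨆ δ : ℝ, A * Real.exp (-(k*δ)) * δ) = A/(Real.exp 1 * k) := by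
    refine le_antisymm (ciSup_le hub) ?_
    have hb : BddAbove (Set.range (fun δ : ℝ => A * Real.exp (-(k*δ)) * δ)) :=
      ⟨A/(Real.exp 1 * k), by rintro _ ⟨δ, rfl⟩; exact hub δ⟩
    calc A/(Real.exp 1 * k) = A * Real.exp (-(k*(1/k))) * (1/k) := heq.symm
      _ ≤ ⨆ δ : ℝ, A * Real.exp (-(k*δ)) * δ := le_ciSup hb (1/k)
  have hsupA : (⨆ δ : ℝ, A * Real.exp (-(k * δ)) * (u t s (q - 1) (x + s + δ) - u t s q x))
      = A/(Real.exp 1 * k) := by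
    rw [iSup_congr (fun δ => by rw [hask δ] :
      ∀ δ : ℝ, A * Real.exp (-(k * δ)) * (u t s (q - 1) (x + s + δ) - u t s q x)
        = A * Real.exp (-(k*δ)) * δ)]
    exact hsup
  have hsupB : (⨆ δ : ℝ, A * Real.exp (-(k * δ)) * (u t s (q + 1) (x - s + δ) - u t s q x))
      = A/(Real.exp 1 * k) := by
    rw [iSup_congr (fun δ => by rw [hbid δ] :
      ∀ δ : ℝ, A * Real.exp (-(k * δ)) * (u t s (q + 1) (x - s + δ) - u t s q x)
        = A * Real.exp (-(k*δ)) * δ)]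
    exact hsup
  -- derivatives
  have hdt : deriv (fun τ => u τ s q x) t = -(2*A/(Real.exp 1*k)) := by
    have hf : (fun τ => u τ s q x)
        = fun τ : ℝ => x + (q:ℝ)*s + 2*A/(Real.exp 1*k)*(T-τ) := funext fun τ => hu τ s q x
    rw [hf]
    have h : HasDerivAt (fun τ : ℝ => x + (q:ℝ)*s + 2*A/(Real.exp 1*k)*(T-τ))
        (2*A/(Real.exp 1*k) * (0-1)) t :=
      (((hasDerivAt_const t T).sub (hasDerivAt_id t)).const_mul _).const_add _
    rw [h.deriv]; ring
  have hds : deriv (fun y => u t y q x) = fun _ : ℝ => (q:ℝ) := by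
    funext y
    have hf : (fun y => u t y q x)
        = fun y : ℝ => x + (q:ℝ)*y + 2*A/(Real.exp 1*k)*(T-t) := funext fun y => hu t y q x
    rw [hf]
    have h : HasDerivAt (fun y : ℝ => x + (q:ℝ)*y + 2*A/(Real.exp 1*k)*(T-t))
        ((q:ℝ)*1) y :=
      (((hasDerivAt_id y).const_mul ((q:ℝ))).const_add x).add_const _
    rw [h.deriv]; ring
  have hdss : deriv (deriv (fun y => u t y q x)) s = 0 := by
    rw [hds]; simp
  refine ⟨by rw [hask]; exact heq, ?_, by rw [hbid]; exact heq, ?_, ?_, ?_⟩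
  · intro δ hδ; rw [hask, hask, heq]; exact hlt δ hδ
  · intro δ hδ; rw [hbid, hbid, heq]; exact hlt δ hδ
  · unfold HJB
    rw [hdt, hdss, hsupA, hsupB]
    ring
  · rw [hu]; ring
end

section
/- Let A > 0, k > 0, η ≥ 0, and let θ₀, θ₁, θ₂ : [0,T] × ℝ → ℝ be arbitrary functions. Define u(t,s,q,x) = x + θ₀(t,s) + q·θ₁(t,s) − η·q²·θ₂(t,s) for (t,s,q,x) ∈ [0,T] × ℝ × ℤ × ℝ. Then for every (t,s,q,x): (i) the ask functional δ ↦ A·e^{−kδ}·(u(t,s,q−1,x+s+δ) − u(t,s,q,x)) attains its supremum over δ ∈ ℝ at the unique point δ⁺* = 1/k − s + θ₁(t,s) + η·(1−2q)·θ₂(t,s); (ii) the bid functional δ ↦ A·e^{−kδ}·(u(t,s,q+1,x−s+δ) − u(t,s,q,x)) attains its supremum at the unique point δ⁻* = 1/k + s − θ₁(t,s) + η·(1+2q)·θ₂(t,s); (iii) consequently the optimal bid–ask spread is ψ* = δ⁺* + δ⁻* = 2/k + 2η·θ₂(t,s), and the indifference price r* = s + (δ⁺* − δ⁻*)/2 equals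 θ₁(t,s) − 2η·q·θ₂(t,s). -/
lemma aux_max (A k c δ δs : ℝ) (hA : 0 < A) (hk : 0 < k)
    (hδs : δs = c + 1 / k) (hne : δ ≠ δs) :
    A * Real.exp (-(k * δ)) * (δ - c) < A * Real.exp (-(k * δs)) * (δs - c) := by
  have hy : k * (δ - δs) ≠ 0 := mul_ne_zero hk.ne' (sub_ne_zero.mpr hne)
  have h1 : k * (δ - δs) + 1 < Real.exp (k * (δ - δs)) := Real.add_one_lt_exp hy
  have hpos : 0 < Real.exp (-(k * δ)) := Real.exp_pos _
  have hE : Real.exp (-(k * δs)) = Real.exp (-(k * δ)) * Real.exp (k * (δ - δs)) := by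
    rw [← Real.exp_add]; ring_nf
  have key : Real.exp (-(k * δ)) * (δ - c) < Real.exp (-(k * δs)) * (δs - c) := by
    subst hδs
    rw [hE]
    have h2 := mul_lt_mul_of_pos_left h1 hpos
    have hk' : k ≠ 0 := hk.ne'
    have e1 : k * (Real.exp (-(k * δ)) * (δ - c))
        = Real.exp (-(k * δ)) * (k * (δ - (c + 1 / k)) + 1) := by field_simp; ring
    have e2 : k * (Real.exp (-(k * δ)) * Real.exp (k * (δ - (c + 1 / k))) * (c + 1 / k - c))
        = Real.exp (-(k * δ)) * Real.exp (k * (δ - (c + 1 / k))) := by field_simp; ring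
    have goal' : k * (Real.exp (-(k * δ)) * (δ - c))
        < k * (Real.exp (-(k * δ)) * Real.exp (k * (δ - (c + 1 / k))) * (c + 1 / k - c)) := by
      rw [e1, e2]; exact h2
    exact (mul_lt_mul_iff_right₀ hk).mp goal'
  calc A * Real.exp (-(k * δ)) * (δ - c) = A * (Real.exp (-(k * δ)) * (δ - c)) := by ring
    _ < A * (Real.exp (-(k * δs)) * (δs - c)) := by exact mul_lt_mul_of_pos_left key hA
    _ = A * Real.exp (-(k * δs)) * (δs - c) := by ring

/-- Optimal-quotes computation for the linear utility with quadratic inventory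
penalty (Theorems 2 and 3 of the paper): for the ansatz
`u(t,s,q,x) = x + θ₀(t,s) + q·θ₁(t,s) − η·q²·θ₂(t,s)`, the ask (resp. bid)
functional attains its supremum at the unique point
`δ⁺* = 1/k − s + θ₁ + η(1−2q)θ₂` (resp. `δ⁻* = 1/k + s − θ₁ + η(1+2q)θ₂`), so that
the optimal spread is `2/k + 2ηθ₂` and the indifference price is `θ₁ − 2ηqθ₂`. -/
theorem stmt_5 (T A k η : ℝ) (hT : 0 < T) (hA : 0 < A) (hk : 0 < k) (hη : 0 ≤ η)
    (θ₀ θ₁ θ₂ : ℝ → ℝ → ℝ)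
    (u : ℝ → ℝ → ℤ → ℝ → ℝ)
    (hu : ∀ (t s : ℝ) (q : ℤ) (x : ℝ),
      u t s q x = x + θ₀ t s + (q : ℝ) * θ₁ t s - η * (q : ℝ) ^ 2 * θ₂ t s) :
    ∀ t ∈ Set.Icc (0 : ℝ) T, ∀ (s : ℝ) (q : ℤ) (x : ℝ),
      ∀ δp δm : ℝ,
        δp = 1 / k - s + θ₁ t s + η * (1 - 2 * (q : ℝ)) * θ₂ t s →
        δm = 1 / k + s - θ₁ t s + η * (1 + 2 * (q : ℝ)) * θ₂ t s →
          -- (i) the ask functional attains its supremum at the unique point `δ⁺*`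
          (∀ δ : ℝ, δ ≠ δp →
            A * Real.exp (-(k * δ)) * (u t s (q - 1) (x + s + δ) - u t s q x)
              < A * Real.exp (-(k * δp)) * (u t s (q - 1) (x + s + δp) - u t s q x)) ∧
          -- (ii) the bid functional attains its supremum at the unique point `δ⁻*`
          (∀ δ : ℝ, δ ≠ δm →
            A * Real.exp (-(k * δ)) * (u t s (q + 1) (x - s + δ) - u t s q x)
              < A * Real.exp (-(k * δm)) * (u t s (q + 1) (x - s + δm) - u t s q x)) ∧
          -- (iii) optimal spread and indifference price
          δp + δm = 2 / k + 2 * η * θ₂ t s ∧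
          s + (δp - δm) / 2 = θ₁ t s - 2 * η * (q : ℝ) * θ₂ t s := by
  intro t ht s q x δp δm hδp hδm
  have hk' : k ≠ 0 := hk.ne'
  have hba : ∀ δ : ℝ, u t s (q - 1) (x + s + δ) - u t s q x = δ - (δp - 1 / k) := by
    intro δ; rw [hu, hu, hδp]; push_cast; ring
  have hbb : ∀ δ : ℝ, u t s (q + 1) (x - s + δ) - u t s q x = δ - (δm - 1 / k) := by
    intro δ; rw [hu, hu, hδm]; push_cast; ring
  refine ⟨?_, ?_, ?_, ?_⟩
  · intro δ hδ
    rw [hba, hba]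
    exact aux_max A k (δp - 1 / k) δ δp hA hk (by ring) hδ
  · intro δ hδ
    rw [hbb, hbb]
    exact aux_max A k (δm - 1 / k) δ δm hA hk (by ring) hδ
  · rw [hδp, hδm]; field_simp; ring
  · rw [hδp, hδm]; ring
end

section
/- Let A > 0, k > 0, γ > 0 and let θ₀, θ₂ : [0,T] → ℝ and θ₁ : [0,T] × ℝ → ℝ be arbitrary functions. Define u(t,s,q,x) = −exp(−γ·(x + θ₀(t) + q·θ₁(t,s) + q²·θ₂(t))) for (t,s,q,x) ∈ [0,T] × ℝ × ℤ × ℝ. Then for every (t,s,q,x): (i) the ask functional δ ↦ A·e^{−kδ}·(u(t,s,q−1,x+s+δ) − u(t,s,q,x)) attains its supremum over δ ∈ ℝ at the unique point δ⁺* = (1/γ)·log(1+γ/k) − s + θ₁(t,s) − (1−2q)·θ₂(t); (ii) the bid functional δ ↦ A·e^{−kδ}·(u(t,s,q+1,x−s+δ) − u(t,s,q,x)) attains its supremum at the unique point δ⁻* = (1/γ)·log(1+γ/k) + s − θ₁(t,s) − (1+2q)·θ₂(t); (iii) consequently the optimal bid–ask spread is ψ* = δ⁺* + δ⁻* = (2/γ)·log(1+γ/k)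 − 2θ₂(t), and the indifference price r* = s + (δ⁺* − δ⁻*)/2 equals θ₁(t,s) + 2q·θ₂(t). -/
private lemma key_ineq (k γ w : ℝ) (hk : 0 < k) (hγ : 0 < γ) (hw : w ≠ 0) :
    (k + γ) * Real.exp (-(k * w)) < γ + k * Real.exp (-((k + γ) * w)) := by
  have hkγ : 0 < k + γ := by linarith
  have ha : (0:ℝ) < γ / (k + γ) := by positivity
  have hb : (0:ℝ) < k / (k + γ) := by positivity
  have hab : γ / (k + γ) + k / (k + γ) = 1 := by field_simp; ring
  have hne : (0:ℝ) ≠ -((k + γ) * w) := by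
    intro h
    apply hw
    have h2 : (k + γ) * w = 0 := by linarith
    rcases mul_eq_zero.mp h2 with h3 | h3
    · exact absurd h3 (ne_of_gt hkγ)
    · exact h3
  have h := strictConvexOn_exp.2 (Set.mem_univ (0:ℝ)) (Set.mem_univ (-((k + γ) * w))) hne ha hb hab
  simp only [smul_eq_mul, mul_zero, zero_add, Real.exp_zero, mul_one] at h
  have hx : k / (k + γ) * -((k + γ) * w) = -(k * w) := by field_simp
  rw [hx] at h
  have := mul_lt_mul_of_pos_left h hkγ
  calc (k + γ) * Real.exp (-(k * w)) < (k + γ) * (γ / (k + γ) + k / (k + γ) * Real.exp (-((k + γ) * w))) := this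
    _ = γ + k * Real.exp (-((k + γ) * w)) := by field_simp

private lemma max_lemma (A k γ : ℝ) (hA : 0 < A) (hk : 0 < k) (hγ : 0 < γ)
    (E δ₀ δs δ : ℝ) (hδs : δs = 1 / γ * Real.log (1 + γ / k) + δ₀) (hδ : δ ≠ δs) :
    A * Real.exp (-(k * δ)) * (Real.exp E - Real.exp (E - γ * (δ - δ₀)))
      < A * Real.exp (-(k * δs)) * (Real.exp E - Real.exp (E - γ * (δs - δ₀))) := by
  have hkγ : 0 < k + γ := by linarith
  set w := δ - δs with hw
  have hw0 : w ≠ 0 := sub_ne_zero.mpr hδ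
  have key := key_ineq k γ w hk hγ hw0
  -- exp(-(γ*(δs-δ₀))) = k/(k+γ)
  have hlog : γ * (δs - δ₀) = Real.log ((k + γ) / k) := by
    rw [hδs]; field_simp; ring
  have hr : Real.exp (-(γ * (δs - δ₀))) = k / (k + γ) := by
    rw [hlog, Real.exp_neg, Real.exp_log (by positivity), inv_div]
  -- decompose exponentials
  have e1 : Real.exp (-(k * δ)) = Real.exp (-(k * δs)) * Real.exp (-(k * w)) := by
    rw [← Real.exp_add, hw]; ring_nf
  have e2 : Real.exp (E - γ * (δ - δ₀))
      = Real.exp E * (k / (k + γ)) * Real.exp (-(γ * w)) := by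
    rw [← hr, ← Real.exp_add, ← Real.exp_add, hw]; ring_nf
  have e3 : Real.exp (E - γ * (δs - δ₀)) = Real.exp E * (k / (k + γ)) := by
    rw [← hr, ← Real.exp_add]; ring_nf
  have e4 : Real.exp (-(k * w)) * Real.exp (-(γ * w)) = Real.exp (-((k + γ) * w)) := by
    rw [← Real.exp_add]; ring_nf
  rw [e1, e2, e3]
  have hE : 0 < Real.exp E := Real.exp_pos _
  have hC : 0 < A * Real.exp (-(k * δs)) * Real.exp E / (k + γ) := by positivity
  have key2 := mul_lt_mul_of_pos_left key hC
  calc A * (Real.exp (-(k * δs)) * Real.exp (-(k * w))) *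
        (Real.exp E - Real.exp E * (k / (k + γ)) * Real.exp (-(γ * w)))
      = A * Real.exp (-(k * δs)) * Real.exp E / (k + γ) *
          ((k + γ) * Real.exp (-(k * w)) - k * (Real.exp (-(k * w)) * Real.exp (-(γ * w)))) := by
        field_simp
    _ = A * Real.exp (-(k * δs)) * Real.exp E / (k + γ) *
          ((k + γ) * Real.exp (-(k * w)) - k * Real.exp (-((k + γ) * w))) := by rw [e4]
    _ < A * Real.exp (-(k * δs)) * Real.exp E / (k + γ) * γ := by
        have := mul_lt_mul_of_pos_left (show (k + γ) * Real.exp (-(k * w)) - k * Real.exp (-((k + γ) * w)) < γ by linarith) hC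
        linarith [this]
    _ = A * Real.exp (-(k * δs)) * (Real.exp E - Real.exp E * (k / (k + γ))) := by
        field_simp; ring

/-- Optimal-quotes computation for the exponential utility (Theorem 4 of the paper):
for the ansatz `u(t,s,q,x) = −exp(−γ(x + θ₀(t) + q·θ₁(t,s) + q²·θ₂(t)))`, the ask
(resp. bid) functional attains its supremum at the unique point
`δ⁺* = (1/γ)log(1+γ/k) − s + θ₁ − (1−2q)θ₂`
(resp. `δ⁻* = (1/γ)log(1+γ/k) + s − θ₁ − (1+2q)θ₂`), so that the optimal spread is
`(2/γ)log(1+γ/k) − 2θ₂` and the indifference price is `θ₁ + 2qθ₂`. -/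
theorem stmt_9 (T A k γ : ℝ) (hT : 0 < T) (hA : 0 < A) (hk : 0 < k) (hγ : 0 < γ)
    (θ₀ θ₂ : ℝ → ℝ) (θ₁ : ℝ → ℝ → ℝ)
    (u : ℝ → ℝ → ℤ → ℝ → ℝ)
    (hu : ∀ (t s : ℝ) (q : ℤ) (x : ℝ),
      u t s q x
        = -Real.exp (-(γ * (x + θ₀ t + (q : ℝ) * θ₁ t s + (q : ℝ) ^ 2 * θ₂ t)))) :
    ∀ t ∈ Set.Icc (0 : ℝ) T, ∀ (s : ℝ) (q : ℤ) (x : ℝ),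
      ∀ δp δm : ℝ,
        δp = 1 / γ * Real.log (1 + γ / k) - s + θ₁ t s - (1 - 2 * (q : ℝ)) * θ₂ t →
        δm = 1 / γ * Real.log (1 + γ / k) + s - θ₁ t s - (1 + 2 * (q : ℝ)) * θ₂ t →
          -- (i) the ask functional attains its supremum at the unique point `δ⁺*`
          (∀ δ : ℝ, δ ≠ δp →
            A * Real.exp (-(k * δ)) * (u t s (q - 1) (x + s + δ) - u t s q x)
              < A * Real.exp (-(k * δp)) * (u t s (q - 1) (x + s + δp) - u t s q x)) ∧
          -- (ii) the bid functional attains its supremum at the unique point `δ⁻*`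
          (∀ δ : ℝ, δ ≠ δm →
            A * Real.exp (-(k * δ)) * (u t s (q + 1) (x - s + δ) - u t s q x)
              < A * Real.exp (-(k * δm)) * (u t s (q + 1) (x - s + δm) - u t s q x)) ∧
          -- (iii) optimal spread and indifference price
          δp + δm = 2 / γ * Real.log (1 + γ / k) - 2 * θ₂ t ∧
          s + (δp - δm) / 2 = θ₁ t s + 2 * (q : ℝ) * θ₂ t := by
  intro t ht s q x δp δm hδp hδm
  set E := -(γ * (x + θ₀ t + (q : ℝ) * θ₁ t s + (q : ℝ) ^ 2 * θ₂ t)) with hE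
  have hask : ∀ δ : ℝ, u t s (q - 1) (x + s + δ) - u t s q x
      = Real.exp E - Real.exp (E - γ * (δ - (-s + θ₁ t s - (1 - 2 * (q : ℝ)) * θ₂ t))) := by
    intro δ
    rw [hu, hu, hE]
    push_cast
    ring_nf
  have hbid : ∀ δ : ℝ, u t s (q + 1) (x - s + δ) - u t s q x
      = Real.exp E - Real.exp (E - γ * (δ - (s - θ₁ t s - (1 + 2 * (q : ℝ)) * θ₂ t))) := by
    intro δ
    rw [hu, hu, hE]
    push_cast
    ring_nf
  refine ⟨?_, ?_, ?_, ?_⟩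
  · intro δ hδ
    rw [hask, hask]
    exact max_lemma A k γ hA hk hγ E _ δp δ (by rw [hδp]; ring) hδ
  · intro δ hδ
    rw [hbid, hbid]
    exact max_lemma A k γ hA hk hγ E _ δm δ (by rw [hδm]; ring) hδ
  · rw [hδp, hδm]; ring
  · rw [hδp, hδm]; ring
end

section
/- Let T > 0, A > 0, k > 0, γ > 0, η ≥ 0 and b, σ ∈ ℝ (constant drift and volatility). Define θ₁(t,s) = s + b·(T−t), θ₂(t) = −η − (γσ²/2)·(T−t), θ₀(t) = (2A/(k+γ))·(1 − (k/γ)·log(1+γ/k) − kη)·(T−t) − (kγA/(k+γ))·σ²·(T−t)²/2, and u̲(t,s,q,x) = −exp(−γ·(x + θ₀(t) + q·θ₁(t,s) + q²·θ₂(t))) on [0,T] × ℝ × ℤ × ℝ. Then: (i) θ₁ satisfies ∂_t θ₁ + b·∂_s θ₁ + (σ²/2)·∂_{ss} θ₁ = 0, θ₁(T,s) = s and ∂_s θ₁ ≡ 1; (ii) for every (t,s,q,x), the ask functional δ ↦ A·e^{−kδ}·(u̲(t,s,q−1,x+s+δ) − u̲(t,s,q,x)) and the bid functional δ ↦ A·e^{−kδ}·(u̲(t,s,q+1,x−s+δ)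 − u̲(t,s,q,x)) attain their suprema over δ ∈ ℝ at the unique points δ±* = (1/γ)·log(1+γ/k) + η + (γσ²/2)·(T−t) ± (b·(T−t) − q·(2η + γσ²·(T−t))); (iii) the optimal spread is ψ* = δ⁺* + δ⁻* = (2/γ)·log(1+γ/k) + 2η + γσ²·(T−t) and the indifference price is r* = s + (δ⁺* − δ⁻*)/2 = s + b·(T−t) − q·(2η + γσ²·(T−t)); (iv) HJB(u̲)(t,s,q,x) ≥ 0 on [0,T] × ℝ × ℤ × ℝ and u̲(T,s,q,x) = −exp(−γ·(x + q·s − η·q²)). -/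
section Aux

lemma key_lemma (k γ z : ℝ) (hk : 0 < k) (hγ : 0 < γ) (hz : z ≠ 0) :
    (k + γ) * Real.exp (-(k * z)) - k * Real.exp (-((k + γ) * z)) < γ := by
  have h1 : k * z + 1 < Real.exp (k * z) := Real.add_one_lt_exp (by positivity)
  have h2 : -(γ * z) + 1 < Real.exp (-(γ * z)) :=
    Real.add_one_lt_exp (neg_ne_zero.mpr (by positivity))
  have hmain : k + γ < γ * Real.exp (k * z) + k * Real.exp (-(γ * z)) := by nlinarith
  have e1 : Real.exp (-(k * z)) * Real.exp (k * z) = 1 := by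
    rw [← Real.exp_add]; simp
  have e2 : Real.exp (-((k + γ) * z)) * Real.exp (k * z) = Real.exp (-(γ * z)) := by
    rw [← Real.exp_add]; congr 1; ring
  have hp : 0 < Real.exp (k * z) := Real.exp_pos _
  nlinarith [mul_lt_mul_of_pos_right hmain hp, e1, e2,
    mul_pos hp (Real.exp_pos (-(k * z)))]

lemma inv_one_add (k γ : ℝ) (hk : 0 < k) (hγ : 0 < γ) :
    (1 + γ / k)⁻¹ = k / (k + γ) := by
  rw [inv_eq_iff_eq_inv, eq_comm, inv_eq_iff_eq_inv, eq_comm]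
  field_simp

lemma sup_value (Aa k γ G δs c : ℝ) (hk : 0 < k) (hγ : 0 < γ)
    (hδs : γ * δs = γ * c + Real.log (1 + γ / k)) :
    Aa * Real.exp (-(k * δs)) * (-Real.exp (-(G + γ * (δs - c))) + Real.exp (-G))
      = Aa * Real.exp (-(k * δs)) * (Real.exp (-G) * (γ / (k + γ))) := by
  have hpos : (0:ℝ) < 1 + γ / k := by positivity
  have h1 : γ * (δs - c) = Real.log (1 + γ / k) := by rw [mul_sub]; linarith
  have h2 : Real.exp (-(G + γ * (δs - c))) = Real.exp (-G) * (k / (k + γ)) := by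
    rw [h1, show -(G + Real.log (1 + γ / k)) = -G + -Real.log (1 + γ / k) by ring,
      Real.exp_add, Real.exp_neg (Real.log (1 + γ / k)), Real.exp_log hpos,
      inv_one_add k γ hk hγ]
  rw [h2]
  have hkγ : (k + γ) ≠ 0 := by positivity
  have h3 : -(k / (k + γ)) + 1 = γ / (k + γ) := by field_simp; ring
  linear_combination (Aa * Real.exp (-(k * δs)) * Real.exp (-G)) * h3

lemma maxlem (Aa k γ G c δs δ : ℝ) (hA : 0 < Aa) (hk : 0 < k) (hγ : 0 < γ)
    (hδs : γ * δs = γ * c + Real.log (1 + γ / k)) (hne : δ ≠ δs) :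
    Aa * Real.exp (-(k * δ)) * (-Real.exp (-(G + γ * (δ - c))) + Real.exp (-G))
      < Aa * Real.exp (-(k * δs)) * (-Real.exp (-(G + γ * (δs - c))) + Real.exp (-G)) := by
  have hpos : (0:ℝ) < 1 + γ / k := by positivity
  have hkγ : (0:ℝ) < k + γ := by positivity
  set z := δ - δs with hzdef
  have hz : z ≠ 0 := sub_ne_zero.mpr hne
  have key := key_lemma k γ z hk hγ hz
  have h1 : γ * (δs - c) = Real.log (1 + γ / k) := by rw [mul_sub]; linarith
  have eδ : Real.exp (-(k * δ)) = Real.exp (-(k * δs)) * Real.exp (-(k * z)) := by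
    rw [← Real.exp_add]; congr 1; rw [hzdef]; ring
  have eg : Real.exp (-(G + γ * (δ - c)))
      = Real.exp (-G) * ((k / (k + γ)) * Real.exp (-(γ * z))) := by
    rw [← inv_one_add k γ hk hγ, ← Real.exp_log hpos, ← Real.exp_neg, ← Real.exp_add,
      ← Real.exp_add]
    congr 1
    rw [← h1, hzdef]; ring
  have ew : Real.exp (-(k * z)) * Real.exp (-(γ * z)) = Real.exp (-((k + γ) * z)) := by
    rw [← Real.exp_add]; congr 1; ring
  rw [sup_value Aa k γ G δs c hk hγ hδs, eδ, eg]
  have hP : 0 < Aa * Real.exp (-(k * δs)) * Real.exp (-G) := by positivity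
  have hstep : Real.exp (-(k * z)) - k / (k + γ) * Real.exp (-((k + γ) * z))
      < γ / (k + γ) := by
    rw [div_mul_eq_mul_div, sub_div' hkγ.ne', div_lt_div_iff₀ hkγ hkγ]
    nlinarith [key]
  calc Aa * (Real.exp (-(k * δs)) * Real.exp (-(k * z)))
        * (-(Real.exp (-G) * (k / (k + γ) * Real.exp (-(γ * z)))) + Real.exp (-G))
      = (Aa * Real.exp (-(k * δs)) * Real.exp (-G))
        * (Real.exp (-(k * z)) - k / (k + γ) * Real.exp (-((k + γ) * z))) := by
        rw [← ew]; ring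
    _ < (Aa * Real.exp (-(k * δs)) * Real.exp (-G)) * (γ / (k + γ)) :=
        mul_lt_mul_of_pos_left hstep hP
    _ = Aa * Real.exp (-(k * δs)) * (Real.exp (-G) * (γ / (k + γ))) := by ring

lemma hasDeriv_quad (a b1 b2 T t : ℝ) :
    HasDerivAt (fun τ : ℝ => -Real.exp (a + b1 * (T - τ) + b2 * (T - τ) ^ 2))
      ((b1 + 2 * b2 * (T - t)) * Real.exp (a + b1 * (T - t) + b2 * (T - t) ^ 2)) t := by
  have h0 : HasDerivAt (fun τ : ℝ => T - τ) (-1) t := (hasDerivAt_id t).const_sub T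
  have h1 : HasDerivAt (fun τ : ℝ => a + b1 * (T - τ) + b2 * (T - τ) ^ 2)
      (b1 * -1 + b2 * (2 * (T - t) ^ 1 * -1)) t :=
    ((h0.const_mul b1).const_add a).add ((h0.pow 2).const_mul b2)
  have h2 := (h1.exp).neg
  refine h2.congr_deriv ?_
  ring

lemma hasDeriv_lin (a c y : ℝ) :
    HasDerivAt (fun y : ℝ => -Real.exp (a + c * y)) (-(c * Real.exp (a + c * y))) y := by
  have h1 : HasDerivAt (fun y : ℝ => a + c * y) c y := by
    simpa using ((hasDerivAt_id y).const_mul c).const_add a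
  have h2 := (h1.exp).neg
  refine h2.congr_deriv ?_
  ring

lemma hasDeriv_lin2 (a c y : ℝ) :
    HasDerivAt (fun y : ℝ => -(c * Real.exp (a + c * y)))
      (-(c ^ 2 * Real.exp (a + c * y))) y := by
  have h1 : HasDerivAt (fun y : ℝ => a + c * y) c y := by
    simpa using ((hasDerivAt_id y).const_mul c).const_add a
  have h2 := ((h1.exp).const_mul c).neg
  refine h2.congr_deriv ?_
  ring

lemma exp_amgm (a b : ℝ) : 2 * Real.exp ((a + b) / 2) ≤ Real.exp a + Real.exp b := by
  have m1 : Real.exp (a / 2) * Real.exp (a / 2) = Real.exp a := by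
    rw [← Real.exp_add]; congr 1; ring
  have m2 : Real.exp (b / 2) * Real.exp (b / 2) = Real.exp b := by
    rw [← Real.exp_add]; congr 1; ring
  have m3 : Real.exp (a / 2) * Real.exp (b / 2) = Real.exp ((a + b) / 2) := by
    rw [← Real.exp_add]; congr 1; ring
  nlinarith [sq_nonneg (Real.exp (a / 2) - Real.exp (b / 2))]

end Aux

set_option maxHeartbeats 1000000 in
/-- Arithmetic-Brownian-motion example of Theorem 4 (exponential utility, risk
aversion `γ`, inventory penalty `η`, mid-price `dS = b dt + σ dW`): with the
explicit `θ₁, θ₂, θ₀` and `u̲ = −exp(−γ(x + θ₀ + qθ₁ + q²θ₂))`, (i) `θ₁` solves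
the backward PDE with terminal datum `s` and `∂ₛθ₁ ≡ 1`; (ii)–(iii) the ask/bid
functionals attain their suprema at the unique points `δ±*`, giving the stated
optimal spread and indifference price; (iv) `HJB(u̲) ≥ 0` with the exponential
terminal condition. -/
theorem stmt_11 (T A k γ η b σ : ℝ) (hT : 0 < T) (hA : 0 < A) (hk : 0 < k)
    (hγ : 0 < γ) (hη : 0 ≤ η)
    (θ₁ : ℝ → ℝ → ℝ) (hθ₁ : ∀ t s : ℝ, θ₁ t s = s + b * (T - t))
    (θ₂ θ₀ : ℝ → ℝ)
    (hθ₂ : ∀ t : ℝ, θ₂ t = -η - γ * σ ^ 2 / 2 * (T - t))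
    (hθ₀ : ∀ t : ℝ, θ₀ t
      = 2 * A / (k + γ) * (1 - k / γ * Real.log (1 + γ / k) - k * η) * (T - t)
        - k * γ * A / (k + γ) * σ ^ 2 * (T - t) ^ 2 / 2)
    (u : ℝ → ℝ → ℤ → ℝ → ℝ)
    (hu : ∀ (t s : ℝ) (q : ℤ) (x : ℝ),
      u t s q x
        = -Real.exp (-(γ * (x + θ₀ t + (q : ℝ) * θ₁ t s + (q : ℝ) ^ 2 * θ₂ t)))) :
    -- (i) `θ₁` solves the backward PDE, `θ₁(T,s) = s` and `∂ₛθ₁ ≡ 1`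
    (∀ t s : ℝ,
      deriv (fun τ => θ₁ τ s) t + b * deriv (fun y => θ₁ t y) s
          + σ ^ 2 / 2 * deriv (deriv (fun y => θ₁ t y)) s = 0 ∧
        θ₁ T s = s ∧ deriv (fun y => θ₁ t y) s = 1) ∧
    -- (ii)–(iii)
    (∀ t ∈ Set.Icc (0 : ℝ) T, ∀ (s : ℝ) (q : ℤ) (x : ℝ),
      ∀ δp δm : ℝ,
        δp = 1 / γ * Real.log (1 + γ / k) + η + γ * σ ^ 2 / 2 * (T - t)
          + (b * (T - t) - (q : ℝ) * (2 * η + γ * σ ^ 2 * (T - t))) →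
        δm = 1 / γ * Real.log (1 + γ / k) + η + γ * σ ^ 2 / 2 * (T - t)
          - (b * (T - t) - (q : ℝ) * (2 * η + γ * σ ^ 2 * (T - t))) →
          -- the ask functional attains its supremum at the unique point `δ⁺*`
          (∀ δ : ℝ, δ ≠ δp →
            A * Real.exp (-(k * δ)) * (u t s (q - 1) (x + s + δ) - u t s q x)
              < A * Real.exp (-(k * δp)) * (u t s (q - 1) (x + s + δp) - u t s q x)) ∧
          -- the bid functional attains its supremum at the unique point `δ⁻*`
          (∀ δ : ℝ, δ ≠ δm →
            A * Real.exp (-(k * δ)) * (u t s (q + 1) (x - s + δ) - u t s q x)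
              < A * Real.exp (-(k * δm)) * (u t s (q + 1) (x - s + δm) - u t s q x)) ∧
          -- optimal spread and indifference price
          δp + δm = 2 / γ * Real.log (1 + γ / k) + 2 * η + γ * σ ^ 2 * (T - t) ∧
          s + (δp - δm) / 2
            = s + b * (T - t) - (q : ℝ) * (2 * η + γ * σ ^ 2 * (T - t))) ∧
    -- (iv) subsolution property and terminal condition
    (∀ t ∈ Set.Icc (0 : ℝ) T, ∀ (s : ℝ) (q : ℤ) (x : ℝ),
      0 ≤ HJB A k (fun _ _ => b) (fun _ _ => σ) u t s q x) ∧
    (∀ (s : ℝ) (q : ℤ) (x : ℝ),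
      u T s q x = -Real.exp (-(γ * (x + (q : ℝ) * s - η * (q : ℝ) ^ 2)))) := by
  have hγ' : γ ≠ 0 := hγ.ne'
  have hkγ0 : (0:ℝ) < k + γ := by positivity
  refine ⟨?_, ?_, ?_, ?_⟩
  · -- (i)
    intro t s
    have f1 : (fun τ => θ₁ τ s) = fun τ => s + b * (T - τ) := funext fun τ => hθ₁ τ s
    have h1 : HasDerivAt (fun τ : ℝ => s + b * (T - τ)) (b * -1) t :=
      (((hasDerivAt_id t).const_sub T).const_mul b).const_add s
    have d1 : deriv (fun τ => θ₁ τ s) t = -b := by rw [f1, h1.deriv]; ring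
    have f2 : (fun y => θ₁ t y) = fun y => y + b * (T - t) := funext fun y => hθ₁ t y
    have d2 : deriv (fun y => θ₁ t y) = fun _ => (1:ℝ) := by
      rw [f2]; funext y
      simpa using ((hasDerivAt_id y).add_const (b * (T - t))).deriv
    refine ⟨?_, by rw [hθ₁]; ring, by rw [d2]⟩
    rw [d1, d2]
    simp
  · -- (ii)-(iii)
    intro t _ s q x δp δm hδp hδm
    set G : ℝ := γ * (x + θ₀ t + (q : ℝ) * θ₁ t s + (q : ℝ) ^ 2 * θ₂ t) with hG
    set cask : ℝ := θ₁ t s - s + (2 * (q : ℝ) - 1) * θ₂ t with hcask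
    set cbid : ℝ := s - θ₁ t s - (2 * (q : ℝ) + 1) * θ₂ t with hcbid
    have hask : ∀ δ : ℝ, u t s (q - 1) (x + s + δ) - u t s q x
        = -Real.exp (-(G + γ * (δ - cask))) + Real.exp (-G) := by
      intro δ
      rw [hu, hu]
      have e1 : -(γ * (x + s + δ + θ₀ t + ((q - 1 : ℤ) : ℝ) * θ₁ t s
          + ((q - 1 : ℤ) : ℝ) ^ 2 * θ₂ t)) = -(G + γ * (δ - cask)) := by
        rw [hG, hcask]; push_cast; ring
      have e2 : -(γ * (x + θ₀ t + (q : ℝ) * θ₁ t s + (q : ℝ) ^ 2 * θ₂ t)) = -G := by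
        rw [hG]
      rw [e1, e2]; ring
    have hbid : ∀ δ : ℝ, u t s (q + 1) (x - s + δ) - u t s q x
        = -Real.exp (-(G + γ * (δ - cbid))) + Real.exp (-G) := by
      intro δ
      rw [hu, hu]
      have e1 : -(γ * (x - s + δ + θ₀ t + ((q + 1 : ℤ) : ℝ) * θ₁ t s
          + ((q + 1 : ℤ) : ℝ) ^ 2 * θ₂ t)) = -(G + γ * (δ - cbid)) := by
        rw [hG, hcbid]; push_cast; ring
      have e2 : -(γ * (x + θ₀ t + (q : ℝ) * θ₁ t s + (q : ℝ) ^ 2 * θ₂ t)) = -G := by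
        rw [hG]
      rw [e1, e2]; ring
    have hγδp : γ * δp = γ * cask + Real.log (1 + γ / k) := by
      rw [hδp, hcask, hθ₁ t s, hθ₂ t]; field_simp; ring
    have hγδm : γ * δm = γ * cbid + Real.log (1 + γ / k) := by
      rw [hδm, hcbid, hθ₁ t s, hθ₂ t]; field_simp; ring
    refine ⟨fun δ hne => ?_, fun δ hne => ?_, by rw [hδp, hδm]; ring,
      by rw [hδp, hδm]; ring⟩
    · rw [hask δ, hask δp]
      exact maxlem A k γ G cask δp δ hA hk hγ hγδp hne
    · rw [hbid δ, hbid δm]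
      exact maxlem A k γ G cbid δm δ hA hk hγ hγδm hne
  · -- (iv) HJB ≥ 0
    intro t _ s q x
    set G : ℝ := γ * (x + θ₀ t + (q : ℝ) * θ₁ t s + (q : ℝ) ^ 2 * θ₂ t) with hG
    set cask : ℝ := θ₁ t s - s + (2 * (q : ℝ) - 1) * θ₂ t with hcask
    set cbid : ℝ := s - θ₁ t s - (2 * (q : ℝ) + 1) * θ₂ t with hcbid
    set δp : ℝ := 1 / γ * Real.log (1 + γ / k) + η + γ * σ ^ 2 / 2 * (T - t)
      + (b * (T - t) - (q : ℝ) * (2 * η + γ * σ ^ 2 * (T - t))) with hδp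
    set δm : ℝ := 1 / γ * Real.log (1 + γ / k) + η + γ * σ ^ 2 / 2 * (T - t)
      - (b * (T - t) - (q : ℝ) * (2 * η + γ * σ ^ 2 * (T - t))) with hδm
    have hask : ∀ δ : ℝ, u t s (q - 1) (x + s + δ) - u t s q x
        = -Real.exp (-(G + γ * (δ - cask))) + Real.exp (-G) := by
      intro δ
      rw [hu, hu]
      have e1 : -(γ * (x + s + δ + θ₀ t + ((q - 1 : ℤ) : ℝ) * θ₁ t s
          + ((q - 1 : ℤ) : ℝ) ^ 2 * θ₂ t)) = -(G + γ * (δ - cask)) := by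
        rw [hG, hcask]; push_cast; ring
      have e2 : -(γ * (x + θ₀ t + (q : ℝ) * θ₁ t s + (q : ℝ) ^ 2 * θ₂ t)) = -G := by
        rw [hG]
      rw [e1, e2]; ring
    have hbid : ∀ δ : ℝ, u t s (q + 1) (x - s + δ) - u t s q x
        = -Real.exp (-(G + γ * (δ - cbid))) + Real.exp (-G) := by
      intro δ
      rw [hu, hu]
      have e1 : -(γ * (x - s + δ + θ₀ t + ((q + 1 : ℤ) : ℝ) * θ₁ t s
          + ((q + 1 : ℤ) : ℝ) ^ 2 * θ₂ t)) = -(G + γ * (δ - cbid)) := by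
        rw [hG, hcbid]; push_cast; ring
      have e2 : -(γ * (x + θ₀ t + (q : ℝ) * θ₁ t s + (q : ℝ) ^ 2 * θ₂ t)) = -G := by
        rw [hG]
      rw [e1, e2]; ring
    have hγδp : γ * δp = γ * cask + Real.log (1 + γ / k) := by
      rw [hδp, hcask, hθ₁ t s, hθ₂ t]; field_simp; ring
    have hγδm : γ * δm = γ * cbid + Real.log (1 + γ / k) := by
      rw [hδm, hcbid, hθ₁ t s, hθ₂ t]; field_simp; ring
    -- suprema
    have hle1 : ∀ δ : ℝ, A * Real.exp (-(k * δ)) * (u t s (q - 1) (x + s + δ) - u t s q x)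
        ≤ A * Real.exp (-(k * δp)) * (u t s (q - 1) (x + s + δp) - u t s q x) := by
      intro δ
      rcases eq_or_ne δ δp with h | h
      · rw [h]
      · rw [hask δ, hask δp]
        exact (maxlem A k γ G cask δp δ hA hk hγ hγδp h).le
    have hle2 : ∀ δ : ℝ, A * Real.exp (-(k * δ)) * (u t s (q + 1) (x - s + δ) - u t s q x)
        ≤ A * Real.exp (-(k * δm)) * (u t s (q + 1) (x - s + δm) - u t s q x) := by
      intro δ
      rcases eq_or_ne δ δm with h | h
      · rw [h]
      · rw [hbid δ, hbid δm]
        exact (maxlem A k γ G cbid δm δ hA hk hγ hγδm h).le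
    have hvp : A * Real.exp (-(k * δp)) * (u t s (q - 1) (x + s + δp) - u t s q x)
        = A * Real.exp (-(k * δp)) * (Real.exp (-G) * (γ / (k + γ))) := by
      rw [hask δp]; exact sup_value A k γ G δp cask hk hγ hγδp
    have hvm : A * Real.exp (-(k * δm)) * (u t s (q + 1) (x - s + δm) - u t s q x)
        = A * Real.exp (-(k * δm)) * (Real.exp (-G) * (γ / (k + γ))) := by
      rw [hbid δm]; exact sup_value A k γ G δm cbid hk hγ hγδm
    have hsup1 : (⨆ δ : ℝ, A * Real.exp (-(k * δ)) * (u t s (q - 1) (x + s + δ) - u t s q x))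
        = A * Real.exp (-(k * δp)) * (Real.exp (-G) * (γ / (k + γ))) := by
      rw [← hvp]
      exact le_antisymm (ciSup_le hle1)
        (le_ciSup ⟨_, by rintro y ⟨i, rfl⟩; exact hle1 i⟩ δp)
    have hsup2 : (⨆ δ : ℝ, A * Real.exp (-(k * δ)) * (u t s (q + 1) (x - s + δ) - u t s q x))
        = A * Real.exp (-(k * δm)) * (Real.exp (-G) * (γ / (k + γ))) := by
      rw [← hvm]
      exact le_antisymm (ciSup_le hle2)
        (le_ciSup ⟨_, by rintro y ⟨i, rfl⟩; exact hle2 i⟩ δm)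
    -- derivatives
    set M : ℝ := 1 - k / γ * Real.log (1 + γ / k) - k * η with hM
    set a1 : ℝ := -(γ * (x + (q : ℝ) * s - (q : ℝ) ^ 2 * η)) with ha1
    set b1 : ℝ := -(γ * (2 * A / (k + γ) * M + (q : ℝ) * b - (q : ℝ) ^ 2 * γ * σ ^ 2 / 2))
      with hb1
    set b2 : ℝ := γ ^ 2 * k * A * σ ^ 2 / (k + γ) / 2 with hb2
    have hfun_t : (fun τ => u τ s q x)
        = fun τ => -Real.exp (a1 + b1 * (T - τ) + b2 * (T - τ) ^ 2) := by
      funext τ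
      rw [hu, hθ₀, hθ₁, hθ₂, neg_inj, Real.exp_eq_exp, ha1, hb1, hb2, hM]
      ring
    have hdt : deriv (fun τ => u τ s q x) t
        = (b1 + 2 * b2 * (T - t)) * Real.exp (a1 + b1 * (T - t) + b2 * (T - t) ^ 2) := by
      rw [hfun_t]; exact (hasDeriv_quad a1 b1 b2 T t).deriv
    have hEG : Real.exp (a1 + b1 * (T - t) + b2 * (T - t) ^ 2) = Real.exp (-G) := by
      rw [Real.exp_eq_exp, ha1, hb1, hb2, hM, hG, hθ₀, hθ₁, hθ₂]
      ring
    set a2 : ℝ := -(γ * (x + θ₀ t + (q : ℝ) * b * (T - t) + (q : ℝ) ^ 2 * θ₂ t)) with ha2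
    set c : ℝ := -(γ * (q : ℝ)) with hc
    have hfun_s : (fun y => u t y q x) = fun y => -Real.exp (a2 + c * y) := by
      funext y
      rw [hu, hθ₁, neg_inj, Real.exp_eq_exp, ha2, hc]
      ring
    have hds : deriv (fun y => u t y q x) s = -(c * Real.exp (a2 + c * s)) := by
      rw [hfun_s]; exact (hasDeriv_lin a2 c s).deriv
    have hder_fun : deriv (fun y => u t y q x) = fun y => -(c * Real.exp (a2 + c * y)) := by
      rw [hfun_s]; funext y; exact (hasDeriv_lin a2 c y).deriv
    have hdss : deriv (deriv (fun y => u t y q x)) s = -(c ^ 2 * Real.exp (a2 + c * s)) := by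
      rw [hder_fun]; exact (hasDeriv_lin2 a2 c s).deriv
    have hEs : Real.exp (a2 + c * s) = Real.exp (-G) := by
      rw [Real.exp_eq_exp, ha2, hc, hG, hθ₁]
      ring
    -- core inequality
    have hAM := exp_amgm (-(k * δp)) (-(k * δm))
    rw [show (-(k * δp) + -(k * δm)) / 2 = -(k * (δp + δm) / 2) by ring] at hAM
    have hB := Real.add_one_le_exp (-(k * (δp + δm) / 2))
    have hm : k * (δp + δm) / 2
        = k / γ * Real.log (1 + γ / k) + k * η + k * γ * σ ^ 2 * (T - t) / 2 := by
      rw [hδp, hδm]; field_simp; ring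
    rw [hm] at hAM hB
    have hEE : 2 * M - k * γ * σ ^ 2 * (T - t)
        ≤ Real.exp (-(k * δp)) + Real.exp (-(k * δm)) := by
      rw [hM]; linarith
    have hHJBeq : HJB A k (fun _ _ => b) (fun _ _ => σ) u t s q x
        = Real.exp (-G) * (A * γ / (k + γ))
          * ((Real.exp (-(k * δp)) + Real.exp (-(k * δm)))
            - (2 * M - k * γ * σ ^ 2 * (T - t))) := by
      simp only [HJB]
      rw [hdt, hds, hdss, hsup1, hsup2, hEG, hEs, hb1, hb2, hc]
      ring
    rw [hHJBeq]
    apply mul_nonneg (mul_nonneg (Real.exp_pos _).le (by positivity))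
    linarith [hEE]
  · -- terminal condition
    intro s q x
    rw [hu, hθ₀, hθ₁, hθ₂, neg_inj, Real.exp_eq_exp]
    ring
end

section
/- Let T > 0, a > 0, μ ∈ ℝ, σ ∈ ℝ, A > 0, k > 0, γ > 0, η ≥ 0. Define θ₁(t,s) = s·e^{−a(T−t)} + μ·(1 − e^{−a(T−t)}) and θ₂(t) = −η − (γσ²/(4a))·(1 − e^{−2a(T−t)}). Then: (i) θ₁ satisfies ∂_t θ₁(t,s) + a·(μ−s)·∂_s θ₁(t,s) + (σ²/2)·∂_{ss} θ₁(t,s) = 0 on [0,T] × ℝ, θ₁(T,s) = s, and ∂_s θ₁(t,s) = e^{−a(T−t)} (independent of s); (ii) θ₂ satisfies θ₂′(t) = (γ/2)·σ²·e^{−2a(T−t)} on [0,T] and θ₂(T) = −η; (iii) for any function θ₀ : [0,T] → ℝ and u(t,s,q,x) = −exp(−γ·(x + θ₀(t) + q·θ₁(t,s) + q²·θ₂(t))), the ask functional δ ↦ A·e^{−kδ}·(u(t,s,q−1,x+s+δ) − u(t,s,q,x)) and the bid functional δ ↦ A·e^{−kδ}·(u(t,s,q+1,x−s+δ) − u(t,s,q,x))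 attain their suprema over δ ∈ ℝ at the unique points δ±* = (1/γ)·log(1+γ/k) + η + (γσ²/(4a))·(1 − e^{−2a(T−t)}) ± ((μ−s)·(1 − e^{−a(T−t)}) − q·(2η + (γσ²/(2a))·(1 − e^{−2a(T−t)}))), so that the optimal spread is ψ* = (2/γ)·log(1+γ/k) + 2η + (γσ²/(2a))·(1 − e^{−2a(T−t)}) and the indifference price is r* = s·e^{−a(T−t)} + μ·(1 − e^{−a(T−t)}) − q·(2η + (γσ²/(2a))·(1 − e^{−2a(T−t)})). -/
lemma hasDerivAt_exp_neg (c T t : ℝ) :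
    HasDerivAt (fun τ => Real.exp (-(c * (T - τ)))) (c * Real.exp (-(c * (T - t)))) t := by
  have h1 : HasDerivAt (fun τ : ℝ => -(c * (T - τ))) c t := by
    have := (((hasDerivAt_id t).const_sub T).const_mul c).fun_neg
    simpa using this
  simpa [mul_comm] using h1.exp

lemma H_lt (k γ : ℝ) (hk : 0 < k) (hγ : 0 < γ) (w : ℝ) (hw : w ≠ 0) :
    Real.exp (-(k * w)) - k / (k + γ) * Real.exp (-((k + γ) * w)) < 1 - k / (k + γ) := by
  have hkγ : (0:ℝ) < k + γ := by linarith
  set H : ℝ → ℝ := fun x => Real.exp (-(k * x)) - k / (k + γ) * Real.exp (-((k + γ) * x)) with hH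
  have hd : ∀ x : ℝ, HasDerivAt H
      (k * (Real.exp (-((k + γ) * x)) - Real.exp (-(k * x)))) x := by
    intro x
    have h1 : HasDerivAt (fun x : ℝ => Real.exp (-(k * x))) (Real.exp (-(k * x)) * (-k)) x := by
      have : HasDerivAt (fun x : ℝ => -(k * x)) (-k) x := by
        simpa using ((hasDerivAt_id x).const_mul k).fun_neg
      exact this.exp
    have h2 : HasDerivAt (fun x : ℝ => Real.exp (-((k + γ) * x)))
        (Real.exp (-((k + γ) * x)) * (-(k + γ))) x := by
      have : HasDerivAt (fun x : ℝ => -((k + γ) * x)) (-(k + γ)) x := by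
        simpa using ((hasDerivAt_id x).const_mul (k + γ)).fun_neg
      exact this.exp
    have h3 := h1.fun_sub (h2.const_mul (k / (k + γ)))
    refine h3.congr_deriv ?_
    field_simp
    ring
  have hcont : Continuous H := by
    fun_prop
  have hval : ∀ x : ℝ, deriv H x = k * (Real.exp (-((k + γ) * x)) - Real.exp (-(k * x))) :=
    fun x => (hd x).deriv
  have h0 : H 0 = 1 - k / (k + γ) := by simp [hH]
  rcases lt_or_gt_of_ne hw with hneg | hpos
  · have hmono : StrictMonoOn H (Set.Iic 0) := by
      apply strictMonoOn_of_deriv_pos (convex_Iic 0) hcont.continuousOn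
      intro x hx
      rw [interior_Iic] at hx
      rw [hval]
      have : -(k * x) < -((k + γ) * x) := by nlinarith [Set.mem_Iio.mp hx]
      have := Real.exp_lt_exp.mpr this
      nlinarith
    have := hmono (Set.mem_Iic.mpr hneg.le) (Set.mem_Iic.mpr le_rfl) hneg
    rw [h0] at this
    exact this
  · have hanti : StrictAntiOn H (Set.Ici 0) := by
      apply strictAntiOn_of_deriv_neg (convex_Ici 0) hcont.continuousOn
      intro x hx
      rw [interior_Ici] at hx
      rw [hval]
      have : -((k + γ) * x) < -(k * x) := by nlinarith [Set.mem_Ioi.mp hx]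
      have := Real.exp_lt_exp.mpr this
      nlinarith
    have := hanti (Set.mem_Ici.mpr le_rfl) (Set.mem_Ici.mpr hpos.le) hpos
    rw [h0] at this
    exact this

lemma main_max (A k γ C B δstar δ : ℝ) (hA : 0 < A) (hk : 0 < k) (hγ : 0 < γ)
    (hC : 0 < C) (hne : δ ≠ δstar)
    (hstar : B * Real.exp (-(γ * δstar)) = k / (k + γ)) :
    A * Real.exp (-(k * δ)) * (C * (1 - B * Real.exp (-(γ * δ)))) <
      A * Real.exp (-(k * δstar)) * (C * (1 - B * Real.exp (-(γ * δstar)))) := by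
  have key := H_lt k γ hk hγ (δ - δstar) (sub_ne_zero.mpr hne)
  have hBδ : B * Real.exp (-(γ * δ)) = k / (k + γ) * Real.exp (-(γ * (δ - δstar))) := by
    rw [show -(γ * δ) = -(γ * δstar) + -(γ * (δ - δstar)) from by ring, Real.exp_add,
      ← mul_assoc, hstar]
  have hE : Real.exp (-(k * δ)) * (1 - B * Real.exp (-(γ * δ)))
      = Real.exp (-(k * δstar)) * (Real.exp (-(k * (δ - δstar)))
          - k / (k + γ) * Real.exp (-((k + γ) * (δ - δstar)))) := by
    rw [hBδ, show -(k * δ) = -(k * δstar) + -(k * (δ - δstar)) from by ring, Real.exp_add,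
      show -((k + γ) * (δ - δstar)) = -(k * (δ - δstar)) + -(γ * (δ - δstar)) from by ring,
      Real.exp_add]
    ring
  calc A * Real.exp (-(k * δ)) * (C * (1 - B * Real.exp (-(γ * δ))))
      = (A * C * Real.exp (-(k * δstar))) * (Real.exp (-(k * (δ - δstar)))
          - k / (k + γ) * Real.exp (-((k + γ) * (δ - δstar)))) := by
        rw [show A * Real.exp (-(k * δ)) * (C * (1 - B * Real.exp (-(γ * δ))))
            = (A * C) * (Real.exp (-(k * δ)) * (1 - B * Real.exp (-(γ * δ)))) from by ring, hE]
        ring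
    _ < (A * C * Real.exp (-(k * δstar))) * (1 - k / (k + γ)) := by
        exact mul_lt_mul_of_pos_left key (by positivity)
    _ = A * Real.exp (-(k * δstar)) * (C * (1 - B * Real.exp (-(γ * δstar)))) := by
        rw [hstar]; ring

lemma diff_eq (γ X Δ : ℝ) :
    -Real.exp (-(γ * (X + Δ))) + Real.exp (-(γ * X))
      = Real.exp (-(γ * X)) * (1 - Real.exp (-(γ * Δ))) := by
  rw [mul_sub, mul_one, ← Real.exp_add,
    show -(γ * X) + -(γ * Δ) = -(γ * (X + Δ)) from by ring]
  ring




/-- Ornstein–Uhlenbeck example of Theorem 4 (mid-price `dS = a(μ−S)dt + σdW`,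
exponential utility with risk aversion `γ` and inventory penalty `η`): with
`θ₁(t,s) = s·e^{−a(T−t)} + μ(1−e^{−a(T−t)})` and
`θ₂(t) = −η − (γσ²/(4a))(1−e^{−2a(T−t)})`, (i) `θ₁` solves the backward PDE with
terminal datum `s` and `∂ₛθ₁(t,s) = e^{−a(T−t)}`; (ii) `θ₂′(t) = (γ/2)σ²e^{−2a(T−t)}`
and `θ₂(T) = −η`; (iii) for any `θ₀` and the ansatz
`u = −exp(−γ(x + θ₀(t) + qθ₁(t,s) + q²θ₂(t)))`, the ask/bid functionals attain their
suprema at the unique points `δ±*`, giving the stated optimal spread and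
indifference price. -/
theorem stmt_12 (T a μ σ A k γ η : ℝ) (hT : 0 < T) (ha : 0 < a) (hA : 0 < A)
    (hk : 0 < k) (hγ : 0 < γ) (hη : 0 ≤ η)
    (θ₁ : ℝ → ℝ → ℝ)
    (hθ₁ : ∀ t s : ℝ,
      θ₁ t s = s * Real.exp (-(a * (T - t))) + μ * (1 - Real.exp (-(a * (T - t)))))
    (θ₂ : ℝ → ℝ)
    (hθ₂ : ∀ t : ℝ,
      θ₂ t = -η - γ * σ ^ 2 / (4 * a) * (1 - Real.exp (-(2 * a * (T - t))))) :
    -- (i)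
    (∀ t s : ℝ,
      deriv (fun τ => θ₁ τ s) t + a * (μ - s) * deriv (fun y => θ₁ t y) s
          + σ ^ 2 / 2 * deriv (deriv (fun y => θ₁ t y)) s = 0 ∧
        θ₁ T s = s ∧ deriv (fun y => θ₁ t y) s = Real.exp (-(a * (T - t)))) ∧
    -- (ii)
    (∀ t : ℝ, deriv θ₂ t = γ / 2 * σ ^ 2 * Real.exp (-(2 * a * (T - t)))) ∧
    θ₂ T = -η ∧
    -- (iii)
    (∀ θ₀ : ℝ → ℝ, ∀ u : ℝ → ℝ → ℤ → ℝ → ℝ,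
      (∀ (t s : ℝ) (q : ℤ) (x : ℝ),
        u t s q x
          = -Real.exp (-(γ * (x + θ₀ t + (q : ℝ) * θ₁ t s + (q : ℝ) ^ 2 * θ₂ t)))) →
      ∀ t ∈ Set.Icc (0 : ℝ) T, ∀ (s : ℝ) (q : ℤ) (x : ℝ),
        ∀ δp δm : ℝ,
          δp = 1 / γ * Real.log (1 + γ / k) + η
            + γ * σ ^ 2 / (4 * a) * (1 - Real.exp (-(2 * a * (T - t))))
            + ((μ - s) * (1 - Real.exp (-(a * (T - t))))
              - (q : ℝ) * (2 * η
                + γ * σ ^ 2 / (2 * a) * (1 - Real.exp (-(2 * a * (T - t)))))) →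
          δm = 1 / γ * Real.log (1 + γ / k) + η
            + γ * σ ^ 2 / (4 * a) * (1 - Real.exp (-(2 * a * (T - t))))
            - ((μ - s) * (1 - Real.exp (-(a * (T - t))))
              - (q : ℝ) * (2 * η
                + γ * σ ^ 2 / (2 * a) * (1 - Real.exp (-(2 * a * (T - t)))))) →
            -- the ask functional attains its supremum at the unique point `δ⁺*`
            (∀ δ : ℝ, δ ≠ δp →
              A * Real.exp (-(k * δ)) * (u t s (q - 1) (x + s + δ) - u t s q x)
                < A * Real.exp (-(k * δp))
                    * (u t s (q - 1) (x + s + δp) - u t s q x)) ∧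
            -- the bid functional attains its supremum at the unique point `δ⁻*`
            (∀ δ : ℝ, δ ≠ δm →
              A * Real.exp (-(k * δ)) * (u t s (q + 1) (x - s + δ) - u t s q x)
                < A * Real.exp (-(k * δm))
                    * (u t s (q + 1) (x - s + δm) - u t s q x)) ∧
            -- optimal spread
            δp + δm = 2 / γ * Real.log (1 + γ / k) + 2 * η
              + γ * σ ^ 2 / (2 * a) * (1 - Real.exp (-(2 * a * (T - t)))) ∧
            -- indifference price
            s + (δp - δm) / 2
              = s * Real.exp (-(a * (T - t))) + μ * (1 - Real.exp (-(a * (T - t))))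
                - (q : ℝ) * (2 * η
                  + γ * σ ^ 2 / (2 * a) * (1 - Real.exp (-(2 * a * (T - t)))))) := by
  have ha' : a ≠ 0 := ne_of_gt ha
  have hγ' : γ ≠ 0 := ne_of_gt hγ
  have hk' : k ≠ 0 := ne_of_gt hk
  refine ⟨?_, ?_, ?_, ?_⟩
  · -- (i)
    intro t s
    have hfun : (fun τ => θ₁ τ s)
        = fun τ => s * Real.exp (-(a * (T - τ))) + μ * (1 - Real.exp (-(a * (T - τ)))) :=
      funext fun τ => hθ₁ τ s
    have hdt : deriv (fun τ => θ₁ τ s) t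
        = s * (a * Real.exp (-(a * (T - t)))) + μ * (0 - a * Real.exp (-(a * (T - t)))) := by
      rw [hfun]
      exact (((hasDerivAt_exp_neg a T t).const_mul s).add
        (((hasDerivAt_const t (1 : ℝ)).sub (hasDerivAt_exp_neg a T t)).const_mul μ)).deriv
    have hds : ∀ y : ℝ, deriv (fun y => θ₁ t y) y = Real.exp (-(a * (T - t))) := by
      intro y
      have hfun2 : (fun y => θ₁ t y)
          = fun y => y * Real.exp (-(a * (T - t))) + μ * (1 - Real.exp (-(a * (T - t)))) :=
        funext fun y => hθ₁ t y
      rw [hfun2]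
      have : HasDerivAt (fun y : ℝ => y * Real.exp (-(a * (T - t)))
          + μ * (1 - Real.exp (-(a * (T - t))))) (Real.exp (-(a * (T - t)))) y := by
        simpa using ((hasDerivAt_id y).mul_const (Real.exp (-(a * (T - t))))).add_const
          (μ * (1 - Real.exp (-(a * (T - t)))))
      exact this.deriv
    have hdd : deriv (deriv (fun y => θ₁ t y)) s = 0 := by
      have : deriv (fun y => θ₁ t y) = fun _ : ℝ => Real.exp (-(a * (T - t))) :=
        funext fun y => hds y
      rw [this]
      simp
    refine ⟨?_, ?_, hds s⟩
    · rw [hdt, hds s, hdd]; ring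
    · rw [hθ₁]; simp
  · -- (ii)
    intro t
    have hfun : θ₂ = fun t => -η - γ * σ ^ 2 / (4 * a) * (1 - Real.exp (-(2 * a * (T - t)))) :=
      funext hθ₂
    rw [hfun]
    have h := (((hasDerivAt_const t (1 : ℝ)).fun_sub
      (hasDerivAt_exp_neg (2 * a) T t)).const_mul (γ * σ ^ 2 / (4 * a))).const_sub (-η)
    rw [h.deriv]
    field_simp
    ring
  · rw [hθ₂]; simp
  · -- (iii)
    intro θ₀ u hu t ht s q x δp δm hδp hδm
    have hpos : (0:ℝ) < 1 + γ / k := by positivity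
    have hinv : (1 + γ / k)⁻¹ = k / (k + γ) := by
      rw [show 1 + γ / k = (k + γ) / k from by field_simp, inv_div]
    set X : ℝ := x + θ₀ t + (q : ℝ) * θ₁ t s + (q : ℝ) ^ 2 * θ₂ t with hX
    set gp : ℝ := s - θ₁ t s + (1 - 2 * (q : ℝ)) * θ₂ t with hgp
    set gm : ℝ := -s + θ₁ t s + (2 * (q : ℝ) + 1) * θ₂ t with hgm
    have hsum_p : γ * (gp + δp) = Real.log (1 + γ / k) := by
      rw [hgp, hδp, hθ₁, hθ₂]
      field_simp
      ring
    have hsum_m : γ * (gm + δm) = Real.log (1 + γ / k) := by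
      rw [hgm, hδm, hθ₁, hθ₂]
      field_simp
      ring
    have hstar_p : Real.exp (-(γ * gp)) * Real.exp (-(γ * δp)) = k / (k + γ) := by
      rw [← Real.exp_add, show -(γ * gp) + -(γ * δp) = -(γ * (gp + δp)) from by ring,
        hsum_p, Real.exp_neg, Real.exp_log hpos, hinv]
    have hstar_m : Real.exp (-(γ * gm)) * Real.exp (-(γ * δm)) = k / (k + γ) := by
      rw [← Real.exp_add, show -(γ * gm) + -(γ * δm) = -(γ * (gm + δm)) from by ring,
        hsum_m, Real.exp_neg, Real.exp_log hpos, hinv]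
    have e1 : ∀ d : ℝ, u t s (q - 1) (x + s + d) - u t s q x
        = Real.exp (-(γ * X)) * (1 - Real.exp (-(γ * gp)) * Real.exp (-(γ * d))) := by
      intro d
      have h1 : u t s (q - 1) (x + s + d) = -Real.exp (-(γ * (X + (gp + d)))) := by
        rw [hu]
        congr 2
        rw [hX, hgp]
        push_cast
        ring
      have h2 : u t s q x = -Real.exp (-(γ * X)) := by rw [hu, hX]
      rw [h1, h2, sub_neg_eq_add, diff_eq γ X (gp + d),
        show -(γ * (gp + d)) = -(γ * gp) + -(γ * d) from by ring, Real.exp_add]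
    have e2 : ∀ d : ℝ, u t s (q + 1) (x - s + d) - u t s q x
        = Real.exp (-(γ * X)) * (1 - Real.exp (-(γ * gm)) * Real.exp (-(γ * d))) := by
      intro d
      have h1 : u t s (q + 1) (x - s + d) = -Real.exp (-(γ * (X + (gm + d)))) := by
        rw [hu]
        congr 2
        rw [hX, hgm]
        push_cast
        ring
      have h2 : u t s q x = -Real.exp (-(γ * X)) := by rw [hu, hX]
      rw [h1, h2, sub_neg_eq_add, diff_eq γ X (gm + d),
        show -(γ * (gm + d)) = -(γ * gm) + -(γ * d) from by ring, Real.exp_add]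
    refine ⟨?_, ?_, ?_, ?_⟩
    · intro δ hδ
      rw [e1 δ, e1 δp]
      exact main_max A k γ (Real.exp (-(γ * X))) (Real.exp (-(γ * gp))) δp δ hA hk hγ
        (Real.exp_pos _) hδ hstar_p
    · intro δ hδ
      rw [e2 δ, e2 δm]
      exact main_max A k γ (Real.exp (-(γ * X))) (Real.exp (-(γ * gm))) δm δ hA hk hγ
        (Real.exp_pos _) hδ hstar_m
    · rw [hδp, hδm]; field_simp; ring
    · rw [hδp, hδm]; ring
end

section
/- Let T > 0, A > 0, k > 0, γ > 0, let b, σ : [0,T] → ℝ be continuous, and suppose v : [0,T] → (ℤ → ℝ) is such that each v_q is continuously differentiable and strictly positive on [0,T], satisfies v_q(T) = 1 and the (countably infinite) ODE system v_q′(t) = ((k·γ·q²/2)·σ(t)² − k·q·b(t))·v_q(t) − A·(1+γ/k)^{−1−k/γ}·(v_{q+1}(t) + v_{q−1}(t)) for every q ∈ ℤ and t ∈ [0,T]. Define u(t,s,q,x) = −exp(−γ·(x + q·s))·v_q(t)^{−γ/k} on [0,T] × ℝ × ℤ × ℝ. Then for every (t,s,q,x): (i) the ask functional δ ↦ A·e^{−kδ}·(u(t,s,q−1,x+s+δ)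 − u(t,s,q,x)) attains its supremum over δ ∈ ℝ at the unique point δ⁺* = (1/γ)·log(1+γ/k) + (1/k)·log(v_q(t)/v_{q−1}(t)), and the bid functional δ ↦ A·e^{−kδ}·(u(t,s,q+1,x−s+δ) − u(t,s,q,x)) attains its supremum at the unique point δ⁻* = (1/γ)·log(1+γ/k) − (1/k)·log(v_{q+1}(t)/v_q(t)); (ii) u satisfies the Hamilton–Jacobi–Bellman equation exactly: HJB(u)(t,s,q,x) = 0, with terminal condition u(T,s,q,x) = −exp(−γ·(x + q·s)). -/
lemma core_ineq (k γ d : ℝ) (hk : 0 < k) (hγ : 0 < γ) (hd : d ≠ 0) :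
    Real.exp (-(k*d)) * (1 - k/(k+γ) * Real.exp (-(γ*d))) < 1 - k/(k+γ) := by
  have hkγ : 0 < k + γ := by linarith
  have hp : 0 < k/(k+γ) := by positivity
  have hp1 : k/(k+γ) < 1 := by rw [div_lt_one hkγ]; linarith
  set y := Real.exp (-(γ*d)) with hy
  have hy0 : 0 < y := Real.exp_pos _
  have hy1 : 1 - γ*d < y := by
    have := Real.add_one_lt_exp (x := -(γ*d)) (neg_ne_zero.mpr (mul_ne_zero hγ.ne' hd))
    rw [← hy] at this; linarith
  rcases le_or_gt (1 - k/(k+γ)*y) 0 with h | h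
  · have : Real.exp (-(k*d)) * (1 - k/(k+γ)*y) ≤ 0 :=
      mul_nonpos_of_nonneg_of_nonpos (Real.exp_pos _).le h
    linarith
  · -- take logs
    have h1p : 0 < 1 - k/(k+γ) := by linarith
    have hlog : Real.log ((1 - k/(k+γ)*y)/(1 - k/(k+γ))) ≤ (1 - k/(k+γ)*y)/(1 - k/(k+γ)) - 1 :=
      Real.log_le_sub_one_of_pos (div_pos h h1p)
    have hld : Real.log ((1 - k/(k+γ)*y)/(1 - k/(k+γ)))
        = Real.log (1 - k/(k+γ)*y) - Real.log (1 - k/(k+γ)) :=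
      Real.log_div (ne_of_gt h) (ne_of_gt h1p)
    have hfrac : (1 - k/(k+γ)*y)/(1 - k/(k+γ)) - 1 = (k/γ)*(1 - y) := by
      field_simp [hγ.ne']
      ring
    have key : -(k*d) + Real.log (1 - k/(k+γ)*y) < Real.log (1 - k/(k+γ)) := by
      have h2 : -(k*d) + (k/γ)*(1-y) < 0 := by
        have : (k/γ) * (1 - γ*d - y) < 0 :=
          mul_neg_of_pos_of_neg (by positivity) (by linarith)
        have he : (k/γ) * (1 - γ*d - y) = -(k*d) + (k/γ)*(1-y) := by
          field_simp; ring
        linarith [he ▸ this]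
      have h3 := hfrac ▸ (hld ▸ hlog)
      linarith
    calc Real.exp (-(k*d)) * (1 - k/(k+γ)*y)
        = Real.exp (-(k*d) + Real.log (1 - k/(k+γ)*y)) := by
          rw [Real.exp_add, Real.exp_log h]
      _ < Real.exp (Real.log (1 - k/(k+γ))) := Real.exp_lt_exp.mpr key
      _ = 1 - k/(k+γ) := Real.exp_log h1p

lemma strict_max(A k γ C a c δs δ : ℝ) (hA : 0 < A) (hk : 0 < k) (hγ : 0 < γ)
    (hC : 0 < C) (ha : 0 < a) (hc : 0 < c)
    (hδs : Real.exp (γ * δs) = (1 + γ/k) * (c / a)) (hne : δ ≠ δs) :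
    A * Real.exp (-(k*δ)) * (C * (a - c * Real.exp (-(γ*δ)))) <
    A * Real.exp (-(k*δs)) * (C * (a - c * Real.exp (-(γ*δs)))) := by
  have hkγ : 0 < k + γ := by linarith
  have hce : c * Real.exp (-(γ*δs)) = a * (k/(k+γ)) := by
    have h1 : Real.exp (-(γ*δs)) = ((1 + γ/k) * (c/a))⁻¹ := by
      rw [← hδs, ← Real.exp_neg]
    rw [h1]
    field_simp
  have h1 : Real.exp (-(k*δ)) = Real.exp (-(k*δs)) * Real.exp (-(k*(δ - δs))) := by
    rw [← Real.exp_add]; ring_nf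
  have h2 : Real.exp (-(γ*δ)) = Real.exp (-(γ*δs)) * Real.exp (-(γ*(δ - δs))) := by
    rw [← Real.exp_add]; ring_nf
  rw [h1, h2]
  have e1 : a - c * (Real.exp (-(γ*δs)) * Real.exp (-(γ*(δ - δs))))
      = a * (1 - k/(k+γ) * Real.exp (-(γ*(δ - δs)))) := by
    rw [← mul_assoc, hce]; ring
  have e2 : a - c * Real.exp (-(γ*δs)) = a * (1 - k/(k+γ)) := by rw [hce]; ring
  rw [e1, e2]
  have key := core_ineq k γ (δ - δs) hk hγ (sub_ne_zero.mpr hne)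
  have hpos : 0 < A * C * a * Real.exp (-(k*δs)) := by positivity
  calc A * (Real.exp (-(k*δs)) * Real.exp (-(k*(δ - δs))))
        * (C * (a * (1 - k/(k+γ) * Real.exp (-(γ*(δ - δs))))))
      = (A * C * a * Real.exp (-(k*δs)))
        * (Real.exp (-(k*(δ - δs))) * (1 - k/(k+γ) * Real.exp (-(γ*(δ - δs))))) := by ring
    _ < (A * C * a * Real.exp (-(k*δs))) * (1 - k/(k+γ)) := by
        exact mul_lt_mul_of_pos_left key hpos
    _ = A * Real.exp (-(k*δs)) * (C * (a * (1 - k/(k+γ)))) := by ring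

/-- Guéant–Lehalle–Fernandez-Tapia-type exact solution, extended to arithmetic
Brownian mid-price `dS = b(t)dt + σ(t)dW`: if the positive family `(v_q)_{q∈ℤ}`
solves the stated countably infinite linear ODE system with `v_q(T) = 1`, then
`u(t,s,q,x) = −exp(−γ(x+qs))·v_q(t)^{−γ/k}` solves the HJB equation exactly, and
the ask/bid functionals attain their suprema at the unique points
`δ⁺* = (1/γ)log(1+γ/k) + (1/k)log(v_q/v_{q−1})` and
`δ⁻* = (1/γ)log(1+γ/k) − (1/k)log(v_{q+1}/v_q)`. -/
theorem stmt_13 (T A k γ : ℝ) (hT : 0 < T) (hA : 0 < A) (hk : 0 < k) (hγ : 0 < γ)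
    (b σ : ℝ → ℝ) (hb : ContinuousOn b (Set.Icc 0 T)) (hσ : ContinuousOn σ (Set.Icc 0 T))
    (v : ℝ → ℤ → ℝ)
    (hv_smooth : ∀ q : ℤ, ContDiff ℝ 1 fun τ => v τ q)
    (hv_pos : ∀ q : ℤ, ∀ t ∈ Set.Icc (0 : ℝ) T, 0 < v t q)
    (hv_T : ∀ q : ℤ, v T q = 1)
    (hv_ode : ∀ q : ℤ, ∀ t ∈ Set.Icc (0 : ℝ) T,
      deriv (fun τ => v τ q) t
        = (k * γ * (q : ℝ) ^ 2 / 2 * (σ t) ^ 2 - k * (q : ℝ) * b t) * v t q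
          - A * (1 + γ / k) ^ (-(1 : ℝ) - k / γ) * (v t (q + 1) + v t (q - 1)))
    (u : ℝ → ℝ → ℤ → ℝ → ℝ)
    (hu : ∀ (t s : ℝ) (q : ℤ) (x : ℝ),
      u t s q x = -Real.exp (-(γ * (x + (q : ℝ) * s))) * (v t q) ^ (-(γ / k))) :
    ∀ t ∈ Set.Icc (0 : ℝ) T, ∀ (s : ℝ) (q : ℤ) (x : ℝ),
      ∀ δp δm : ℝ,
        δp = 1 / γ * Real.log (1 + γ / k) + 1 / k * Real.log (v t q / v t (q - 1)) →
        δm = 1 / γ * Real.log (1 + γ / k) - 1 / k * Real.log (v t (q + 1) / v t q) →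
          -- (i) the ask functional attains its supremum at the unique point `δ⁺*`
          (∀ δ : ℝ, δ ≠ δp →
            A * Real.exp (-(k * δ)) * (u t s (q - 1) (x + s + δ) - u t s q x)
              < A * Real.exp (-(k * δp)) * (u t s (q - 1) (x + s + δp) - u t s q x)) ∧
          -- and the bid functional at the unique point `δ⁻*`
          (∀ δ : ℝ, δ ≠ δm →
            A * Real.exp (-(k * δ)) * (u t s (q + 1) (x - s + δ) - u t s q x)
              < A * Real.exp (-(k * δm)) * (u t s (q + 1) (x - s + δm) - u t s q x)) ∧
          -- (ii) `u` solves the HJB equation exactly, with the exponential terminal datum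
          HJB A k (fun t _ => b t) (fun t _ => σ t) u t s q x = 0 ∧
          u T s q x = -Real.exp (-(γ * (x + (q : ℝ) * s))) := by
  intro t ht s q x δp δm hδp hδm
  have hw : 0 < v t q := hv_pos q t ht
  have hw1 : 0 < v t (q - 1) := hv_pos (q - 1) t ht
  have hw2 : 0 < v t (q + 1) := hv_pos (q + 1) t ht
  have h1p : (0:ℝ) < 1 + γ / k := by positivity
  have hkγ : (0:ℝ) < k + γ := by linarith
  set C : ℝ := Real.exp (-(γ * (x + (q : ℝ) * s))) with hCdef
  have hC : 0 < C := Real.exp_pos _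
  set a : ℝ := (v t q) ^ (-(γ / k)) with hadef
  set c1 : ℝ := (v t (q - 1)) ^ (-(γ / k)) with hc1def
  set c2 : ℝ := (v t (q + 1)) ^ (-(γ / k)) with hc2def
  have ha : 0 < a := Real.rpow_pos_of_pos hw _
  have hc1 : 0 < c1 := Real.rpow_pos_of_pos hw1 _
  have hc2 : 0 < c2 := Real.rpow_pos_of_pos hw2 _
  -- difference rewrites
  have hask : ∀ δ : ℝ, u t s (q - 1) (x + s + δ) - u t s q x
      = C * (a - c1 * Real.exp (-(γ * δ))) := by
    intro δ
    rw [hu, hu, hCdef]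
    push_cast
    rw [show -(γ * ((x + s + δ) + ((q:ℝ) - 1) * s)) = -(γ * δ) + -(γ * (x + (q:ℝ) * s)) by ring,
      Real.exp_add]
    ring
  have hbid : ∀ δ : ℝ, u t s (q + 1) (x - s + δ) - u t s q x
      = C * (a - c2 * Real.exp (-(γ * δ))) := by
    intro δ
    rw [hu, hu, hCdef]
    push_cast
    rw [show -(γ * ((x - s + δ) + ((q:ℝ) + 1) * s)) = -(γ * δ) + -(γ * (x + (q:ℝ) * s)) by ring,
      Real.exp_add]
    ring
  -- critical point characterizations
  have hEp : Real.exp (γ * δp) = (1 + γ / k) * (c1 / a) := by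
    have hlw : Real.log (v t q / v t (q - 1)) = Real.log (v t q) - Real.log (v t (q - 1)) :=
      Real.log_div hw.ne' hw1.ne'
    calc Real.exp (γ * δp)
        = Real.exp (Real.log (1 + γ / k)
            + (Real.log (v t q) - Real.log (v t (q - 1))) * (γ / k)) := by
          rw [hδp, hlw]; congr 1; field_simp
      _ = (1 + γ / k) * (Real.exp (Real.log (v t (q - 1)) * (-(γ / k)))
            / Real.exp (Real.log (v t q) * (-(γ / k)))) := by
          rw [Real.exp_add, Real.exp_log h1p, ← Real.exp_sub]; congr 2; ring
      _ = (1 + γ / k) * (c1 / a) := by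
          rw [hc1def, hadef, Real.rpow_def_of_pos hw1, Real.rpow_def_of_pos hw]
  have hEm : Real.exp (γ * δm) = (1 + γ / k) * (c2 / a) := by
    have hlw : Real.log (v t (q + 1) / v t q) = Real.log (v t (q + 1)) - Real.log (v t q) :=
      Real.log_div hw2.ne' hw.ne'
    calc Real.exp (γ * δm)
        = Real.exp (Real.log (1 + γ / k)
            + (Real.log (v t q) - Real.log (v t (q + 1))) * (γ / k)) := by
          rw [hδm, hlw]; congr 1; field_simp; ring
      _ = (1 + γ / k) * (Real.exp (Real.log (v t (q + 1)) * (-(γ / k)))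
            / Real.exp (Real.log (v t q) * (-(γ / k)))) := by
          rw [Real.exp_add, Real.exp_log h1p, ← Real.exp_sub]; congr 2; ring
      _ = (1 + γ / k) * (c2 / a) := by
          rw [hc2def, hadef, Real.rpow_def_of_pos hw2, Real.rpow_def_of_pos hw]
  refine ⟨?_, ?_, ?_, ?_⟩
  · intro δ hne
    rw [hask δ, hask δp]
    exact strict_max A k γ C a c1 δp δ hA hk hγ hC ha hc1 hEp hne
  · intro δ hne
    rw [hbid δ, hbid δm]
    exact strict_max A k γ C a c2 δm δ hA hk hγ hC ha hc2 hEm hne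
  · 
    -- value of the exponentials at the critical points
    have hcep : c1 * Real.exp (-(γ * δp)) = a * (k / (k + γ)) := by
      rw [Real.exp_neg, hEp]
      field_simp
    have hcem : c2 * Real.exp (-(γ * δm)) = a * (k / (k + γ)) := by
      rw [Real.exp_neg, hEm]
      field_simp
    have hek1 : Real.exp (-(k * δp)) = (1 + γ / k) ^ (-(k / γ)) * (v t (q - 1) / v t q) := by
      have hlw : Real.log (v t q / v t (q - 1)) = Real.log (v t q) - Real.log (v t (q - 1)) :=
        Real.log_div hw.ne' hw1.ne'
      calc Real.exp (-(k * δp))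
          = Real.exp (Real.log (1 + γ / k) * (-(k / γ))
              + (Real.log (v t (q - 1)) - Real.log (v t q))) := by
            rw [hδp, hlw]; congr 1; field_simp; ring
        _ = (1 + γ / k) ^ (-(k / γ)) * (v t (q - 1) / v t q) := by
            rw [Real.exp_add, ← Real.rpow_def_of_pos h1p, Real.exp_sub,
              Real.exp_log hw1, Real.exp_log hw]
    have hek2 : Real.exp (-(k * δm)) = (1 + γ / k) ^ (-(k / γ)) * (v t (q + 1) / v t q) := by
      have hlw : Real.log (v t (q + 1) / v t q) = Real.log (v t (q + 1)) - Real.log (v t q) :=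
        Real.log_div hw2.ne' hw.ne'
      calc Real.exp (-(k * δm))
          = Real.exp (Real.log (1 + γ / k) * (-(k / γ))
              + (Real.log (v t (q + 1)) - Real.log (v t q))) := by
            rw [hδm, hlw]; congr 1; field_simp; ring
        _ = (1 + γ / k) ^ (-(k / γ)) * (v t (q + 1) / v t q) := by
            rw [Real.exp_add, ← Real.rpow_def_of_pos h1p, Real.exp_sub,
              Real.exp_log hw2, Real.exp_log hw]
    -- suprema
    have hsup1 : (⨆ δ : ℝ, A * Real.exp (-(k * δ)) * (u t s (q - 1) (x + s + δ) - u t s q x))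
        = A * Real.exp (-(k * δp)) * (C * (a - c1 * Real.exp (-(γ * δp)))) := by
      have hfun : (fun δ : ℝ => A * Real.exp (-(k * δ)) * (u t s (q - 1) (x + s + δ) - u t s q x))
          = fun δ : ℝ => A * Real.exp (-(k * δ)) * (C * (a - c1 * Real.exp (-(γ * δ)))) :=
        funext fun δ => by rw [hask δ]
      rw [hfun]
      have hub : ∀ δ : ℝ, A * Real.exp (-(k * δ)) * (C * (a - c1 * Real.exp (-(γ * δ))))
          ≤ A * Real.exp (-(k * δp)) * (C * (a - c1 * Real.exp (-(γ * δp)))) := by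
        intro δ
        rcases eq_or_ne δ δp with rfl | h
        · exact le_rfl
        · exact (strict_max A k γ C a c1 δp δ hA hk hγ hC ha hc1 hEp h).le
      have hbdd : BddAbove (Set.range fun δ : ℝ =>
          A * Real.exp (-(k * δ)) * (C * (a - c1 * Real.exp (-(γ * δ))))) := by
        refine ⟨A * Real.exp (-(k * δp)) * (C * (a - c1 * Real.exp (-(γ * δp)))), ?_⟩
        rintro y ⟨δ, rfl⟩
        exact hub δ
      exact le_antisymm (ciSup_le hub) (le_ciSup hbdd δp)
    have hsup2 : (⨆ δ : ℝ, A * Real.exp (-(k * δ)) * (u t s (q + 1) (x - s + δ) - u t s q x))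
        = A * Real.exp (-(k * δm)) * (C * (a - c2 * Real.exp (-(γ * δm)))) := by
      have hfun : (fun δ : ℝ => A * Real.exp (-(k * δ)) * (u t s (q + 1) (x - s + δ) - u t s q x))
          = fun δ : ℝ => A * Real.exp (-(k * δ)) * (C * (a - c2 * Real.exp (-(γ * δ)))) :=
        funext fun δ => by rw [hbid δ]
      rw [hfun]
      have hub : ∀ δ : ℝ, A * Real.exp (-(k * δ)) * (C * (a - c2 * Real.exp (-(γ * δ))))
          ≤ A * Real.exp (-(k * δm)) * (C * (a - c2 * Real.exp (-(γ * δm)))) := by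
        intro δ
        rcases eq_or_ne δ δm with rfl | h
        · exact le_rfl
        · exact (strict_max A k γ C a c2 δm δ hA hk hγ hC ha hc2 hEm h).le
      have hbdd : BddAbove (Set.range fun δ : ℝ =>
          A * Real.exp (-(k * δ)) * (C * (a - c2 * Real.exp (-(γ * δ))))) := by
        refine ⟨A * Real.exp (-(k * δm)) * (C * (a - c2 * Real.exp (-(γ * δm)))), ?_⟩
        rintro y ⟨δ, rfl⟩
        exact hub δ
      exact le_antisymm (ciSup_le hub) (le_ciSup hbdd δm)
    -- time derivative
    have htfun : (fun τ => u τ s q x) = fun τ => -C * (v τ q) ^ (-(γ / k)) :=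
      funext fun τ => by rw [hu, ← hCdef]
    have hdv : HasDerivAt (fun τ => v τ q) (deriv (fun τ => v τ q) t) t :=
      (((hv_smooth q).differentiable one_ne_zero) t).hasDerivAt
    have hdu_t : deriv (fun τ => u τ s q x) t
        = -C * (deriv (fun τ => v τ q) t * (-(γ / k)) * (v t q) ^ (-(γ / k) - 1)) := by
      rw [htfun]
      exact ((hdv.rpow_const (Or.inl hw.ne')).const_mul (-C)).deriv
    -- spatial derivatives
    have hsfun : (fun y => u t y q x)
        = fun y => Real.exp (-(γ * x) + (-(γ * (q:ℝ))) * y) * (-a) :=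
      funext fun y => by
        rw [hu, ← hadef, show -(γ * (x + (q:ℝ) * y)) = -(γ * x) + (-(γ * (q:ℝ))) * y by ring]
        ring
    have hlin : ∀ y : ℝ, HasDerivAt (fun y' : ℝ => -(γ * x) + (-(γ * (q:ℝ))) * y')
        (-(γ * (q:ℝ))) y := by
      intro y
      simpa using ((hasDerivAt_id y).const_mul (-(γ * (q:ℝ)))).const_add (-(γ * x))
    have hd1 : ∀ y : ℝ, deriv (fun y' => u t y' q x) y
        = Real.exp (-(γ * x) + (-(γ * (q:ℝ))) * y) * (-(γ * (q:ℝ))) * (-a) := by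
      intro y
      rw [hsfun]
      exact (((hlin y).exp).mul_const (-a)).deriv
    have hd1fun : deriv (fun y => u t y q x)
        = fun y => Real.exp (-(γ * x) + (-(γ * (q:ℝ))) * y) * ((-(γ * (q:ℝ))) * (-a)) :=
      funext fun y => by rw [hd1 y]; ring
    have hd2 : deriv (deriv (fun y => u t y q x)) s
        = Real.exp (-(γ * x) + (-(γ * (q:ℝ))) * s) * (-(γ * (q:ℝ)))
          * ((-(γ * (q:ℝ))) * (-a)) := by
      rw [hd1fun]
      exact (((hlin s).exp).mul_const _).deriv
    have hCs : Real.exp (-(γ * x) + (-(γ * (q:ℝ))) * s) = C := by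
      rw [hCdef]; congr 1; ring
    -- rpow relations
    have hr1 : (v t q) ^ (-(γ / k) - 1) = a / v t q := by
      rw [Real.rpow_sub hw, Real.rpow_one, ← hadef]
    have hB : (1 + γ / k) ^ (-(1 : ℝ) - k / γ)
        = (1 + γ / k) ^ (-(k / γ)) / (1 + γ / k) := by
      rw [show (-(1 : ℝ) - k / γ) = (-(k / γ)) - 1 by ring, Real.rpow_sub h1p, Real.rpow_one]
    -- assemble
    simp only [HJB]
    rw [hdu_t, hd1 s, hd2, hsup1, hsup2, hcep, hcem, hek1, hek2, hCs, hr1,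
      hv_ode q t ht, hB]
    field_simp
    ring
  · rw [hu, hv_T, Real.one_rpow, mul_one]
end
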